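/- arXiv:2505.22468 — 3 statements merged into one kernel-verified Lean document; each statement's English description precedes it below -/
import Mathlib

section
/- Under Assumption 1 and the small cone assumption, each of the operators F, F_h^+ = F I_h^+ R_h, and F̂_h^+ = R_h F I_h^+ admits a distance-like additive eigenvector: there exist v ∈ Lip₁(X) (respectively Lip₁(X), Lip₁(X_h)) and λ ∈ ℝ such that the operator applied to v equals λ + v, and v is distance-like (automatic since X is compact). -/
open Set Filter

/-- The Funk hemi-metric on a cone `C`. -/
noncomputable def funk {n : ℕ} (C : Set (Fin n → ℝ)) (x y : Fin n → ℝ) : ℝ :=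
  Real.log (sInf {l : ℝ | 0 < l ∧ l • y - x ∈ C})

/-- The dual cone of `C`. -/
def dualCone {n : ℕ} (C : Set (Fin n → ℝ)) : Set (Fin n → ℝ) :=
  {y | ∀ x ∈ C, 0 ≤ dotProduct x y}

/-- The cross-section `X = K ∩ Δ` of the small cone `K`,
where `Δ = {x | ⟨x, e*⟩ = 1}`. -/
def crossSec {n : ℕ} (K : Set (Fin n → ℝ)) (estar : Fin n → ℝ) : Set (Fin n → ℝ) :=
  {x ∈ K | dotProduct x estar = 1}

/-- The operator
`F v (x) = inf_a sup_b [log⟨T_{ab}(x), e*⟩ + v (T_{ab}(x)/⟨T_{ab}(x), e*⟩)]`. -/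
noncomputable def Fop {n : ℕ} {E : Type*} (A B : Set E)
    (T : E → E → (Fin n → ℝ) → (Fin n → ℝ)) (estar : Fin n → ℝ)
    (v : (Fin n → ℝ) → ℝ) (x : Fin n → ℝ) : ℝ :=
  ⨅ a : A, ⨆ b : B, (Real.log (dotProduct (T a b x) estar) +
    v ((dotProduct (T a b x) estar)⁻¹ • T a b x))

/-- The interpolation operator `I_h^+ v (x) = min_{y ∈ X_h} [v(y) + Funk(x,y)]`. -/
noncomputable def Ih {n : ℕ} (C : Set (Fin n → ℝ)) (Xh : Finset (Fin n → ℝ))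
    (hne : Xh.Nonempty) (v : (Fin n → ℝ) → ℝ) (x : Fin n → ℝ) : ℝ :=
  Xh.inf' hne (fun y => v y + funk C x y)


open Pointwise Topology

def Sset {n : ℕ} (C : Set (Fin n → ℝ)) (x y : Fin n → ℝ) : Set ℝ :=
  {l : ℝ | 0 < l ∧ l • y - x ∈ C}

lemma funk_def {n : ℕ} (C : Set (Fin n → ℝ)) (x y : Fin n → ℝ) :
    funk C x y = Real.log (sInf (Sset C x y)) := rfl

lemma Sset_bddBelow {n : ℕ} (C : Set (Fin n → ℝ)) (x y : Fin n → ℝ) :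
    BddBelow (Sset C x y) := ⟨0, fun l hl => hl.1.le⟩

/-- inf-sup comparison lemma -/
lemma infSup_le {ι κ : Type*} [Nonempty ι] [Nonempty κ] {f g : ι → κ → ℝ} {c M : ℝ}
    (hf : ∀ i j, |f i j| ≤ M) (hg : ∀ i j, |g i j| ≤ M)
    (h : ∀ i j, f i j ≤ g i j + c) :
    (⨅ i, ⨆ j, f i j) ≤ (⨅ i, ⨆ j, g i j) + c := by
  have bg : ∀ i, BddAbove (Set.range (g i)) := fun i =>
    ⟨M, by rintro _ ⟨j, rfl⟩; exact (abs_le.1 (hg i j)).2⟩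
  have key : ∀ i, (⨆ j, f i j) ≤ (⨆ j, g i j) + c := fun i =>
    ciSup_le fun j => (h i j).trans (add_le_add_left (le_ciSup (bg i) j) c)
  have bf : BddBelow (Set.range fun i => ⨆ j, f i j) := by
    refine ⟨-M, ?_⟩
    rintro _ ⟨i, rfl⟩
    exact le_trans (neg_le_of_abs_le (hf i (Classical.arbitrary κ)))
      (le_ciSup ⟨M, by rintro _ ⟨j, rfl⟩; exact (abs_le.1 (hf i j)).2⟩ (Classical.arbitrary κ))
  rw [← sub_le_iff_le_add]
  exact le_ciInf fun i => sub_le_iff_le_add.2 ((ciInf_le bf i).trans (key i))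

lemma infSup_mem_Icc {ι κ : Type*} [Nonempty ι] [Nonempty κ] {f : ι → κ → ℝ} {a b : ℝ}
    (h : ∀ i j, a ≤ f i j ∧ f i j ≤ b) :
    a ≤ (⨅ i, ⨆ j, f i j) ∧ (⨅ i, ⨆ j, f i j) ≤ b := by
  have bA : ∀ i, BddAbove (Set.range (f i)) := fun i =>
    ⟨b, by rintro _ ⟨j, rfl⟩; exact (h i j).2⟩
  constructor
  · exact le_ciInf fun i =>
      le_trans (h i (Classical.arbitrary κ)).1 (le_ciSup (bA i) (Classical.arbitrary κ))
  · refine le_trans (ciInf_le ?_ (Classical.arbitrary ι)) (ciSup_le fun j => (h _ j).2)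
    refine ⟨a, ?_⟩
    rintro _ ⟨i, rfl⟩
    exact le_trans (h i (Classical.arbitrary κ)).1 (le_ciSup (bA i) (Classical.arbitrary κ))

lemma infSup_add {ι κ : Type*} [Nonempty ι] [Nonempty κ] {f : ι → κ → ℝ} {c M : ℝ}
    (hf : ∀ i j, |f i j| ≤ M) :
    (⨅ i, ⨆ j, (f i j + c)) = (⨅ i, ⨆ j, f i j) + c := by
  have hfc : ∀ i j, |f i j + c| ≤ M + |c| := fun i j =>
    (abs_add_le _ _).trans (add_le_add_left (hf i j) _)
  have hf' : ∀ i j, |f i j| ≤ M + |c| := fun i j => (hf i j).trans (le_add_of_nonneg_right (abs_nonneg c))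
  refine le_antisymm (infSup_le hfc hf' fun i j => le_rfl) ?_
  have := infSup_le (f := f) (g := fun i j => f i j + c) (c := -c) (M := M + |c|)
    hf' hfc (fun i j => by ring_nf; exact le_rfl)
  linarith
/-- membership from a ball around `y` inside `C` -/
lemma Sset_mem_of_ball {n : ℕ} {C : Set (Fin n → ℝ)}
    (h0 : (0 : Fin n → ℝ) ∈ C)
    (hcone : ∀ x ∈ C, ∀ r : ℝ, 0 ≤ r → r • x ∈ C)
    {x y : Fin n → ℝ} {ε : ℝ} (hε : 0 < ε)
    (hball : Metric.closedBall y ε ⊆ C) :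
    (1 + ‖x - y‖ / ε) ∈ Sset C x y := by
  constructor
  · positivity
  · rcases eq_or_ne x y with rfl | hxy
    · simpa using h0
    · set t : ℝ := ‖x - y‖ / ε with ht
      have htpos : 0 < t := by
        have : 0 < ‖x - y‖ := by simpa [sub_eq_zero] using hxy
        positivity
      have hpt : y + t⁻¹ • (y - x) ∈ C := by
        apply hball
        have hne : ‖x - y‖ ≠ 0 := by simpa [sub_eq_zero] using hxy
        have : ‖t⁻¹ • (y - x)‖ = ε := by
          rw [norm_smul, norm_inv, Real.norm_eq_abs, abs_of_pos htpos, ht,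
            norm_sub_rev y x]
          field_simp
        simp [Metric.mem_closedBall, dist_eq_norm, this, hε.le]
      have := hcone _ hpt t htpos.le
      have heq : t • (y + t⁻¹ • (y - x)) = (1 + t) • y - x := by
        rw [smul_add, smul_smul, mul_inv_cancel₀ htpos.ne', one_smul]
        module
      rw [heq] at this
      exact this

/-- lower bound on elements of `Sset` via a dual pairing -/
lemma Sset_lower {n : ℕ} {C : Set (Fin n → ℝ)} {estar : Fin n → ℝ}
    (hdual : ∀ z ∈ C, 0 ≤ dotProduct z estar)
    {z w : Fin n → ℝ} (hw : 0 < dotProduct w estar)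
    {l : ℝ} (hl : l ∈ Sset C z w) :
    dotProduct z estar / dotProduct w estar ≤ l := by
  have h := hdual _ hl.2
  rw [sub_dotProduct, smul_dotProduct, sub_nonneg, smul_eq_mul] at h
  rw [div_le_iff₀ hw]
  linarith

/-- scaling identity for `Sset` -/
lemma Sset_scale {n : ℕ} {C : Set (Fin n → ℝ)}
    (hcone : ∀ x ∈ C, ∀ r : ℝ, 0 ≤ r → r • x ∈ C)
    {z w : Fin n → ℝ} {s t : ℝ} (hs : 0 < s) (ht : 0 < t) :
    Sset C (s⁻¹ • z) (t⁻¹ • w) = (t / s) • (Sset C z w) := by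
  have hts : (0:ℝ) < t / s := by positivity
  ext m
  rw [Set.mem_smul_set_iff_inv_smul_mem₀ hts.ne']
  constructor
  · rintro ⟨hm, hmem⟩
    refine ⟨by positivity, ?_⟩
    have := hcone _ hmem s hs.le
    have heq : s • (m • t⁻¹ • w - s⁻¹ • z) = ((t / s)⁻¹ • m) • w - z := by
      match_scalars <;> field_simp [hs.ne', ht.ne'] <;> linear_combination (-(s * m)) * mul_inv_cancel₀ ht.ne'
    rwa [heq] at this
  · rintro ⟨hm, hmem⟩
    have hm' : 0 < m := by
      rw [smul_eq_mul] at hm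
      have := mul_pos hts hm
      rwa [mul_inv_cancel_left₀ hts.ne'] at this
    refine ⟨hm', ?_⟩
    have := hcone _ hmem s⁻¹ (by positivity)
    have heq : s⁻¹ • (((t / s)⁻¹ • m) • w - z) = m • t⁻¹ • w - s⁻¹ • z := by
      match_scalars <;> field_simp [hs.ne', ht.ne'] <;> linear_combination (m * s) * mul_inv_cancel₀ ht.ne'
    rwa [heq] at this

/-- scaling identity for funk -/
lemma funk_smul {n : ℕ} {C : Set (Fin n → ℝ)}
    (hcone : ∀ x ∈ C, ∀ r : ℝ, 0 ≤ r → r • x ∈ C)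
    {z w : Fin n → ℝ} {s t : ℝ} (hs : 0 < s) (ht : 0 < t)
    (hσ : 0 < sInf (Sset C z w)) :
    funk C (s⁻¹ • z) (t⁻¹ • w) = Real.log (t / s) + funk C z w := by
  rw [funk_def, funk_def, Sset_scale hcone hs ht]
  have := Real.sInf_smul_of_nonneg (a := t / s) (by positivity) (Sset C z w)
  rw [this, smul_eq_mul, Real.log_mul (by positivity) hσ.ne']

/-- triangle inequality for funk, under nonemptiness and ≥1 bounds -/
lemma funk_triangle {n : ℕ} {C : Set (Fin n → ℝ)}
    (hcone : ∀ x ∈ C, ∀ r : ℝ, 0 ≤ r → r • x ∈ C)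
    (hadd : ∀ u ∈ C, ∀ w ∈ C, u + w ∈ C)
    {x y z : Fin n → ℝ}
    (hxy : (Sset C x y).Nonempty) (hyz : (Sset C y z).Nonempty)
    (h1xy : 1 ≤ sInf (Sset C x y)) (h1yz : 1 ≤ sInf (Sset C y z)) :
    funk C x z ≤ funk C x y + funk C y z := by
  have hmul : ∀ s ∈ Sset C x y, ∀ t ∈ Sset C y z, s * t ∈ Sset C x z := by
    rintro s ⟨hs, hsm⟩ t ⟨ht, htm⟩
    refine ⟨mul_pos hs ht, ?_⟩
    have h1 := hcone _ htm s hs.le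
    have heq : s • (t • z - y) + (s • y - x) = (s * t) • z - x := by module
    have := hadd _ h1 _ hsm
    rwa [heq] at this
  have hpos_yz : 0 < sInf (Sset C y z) := lt_of_lt_of_le one_pos h1yz
  have key : sInf (Sset C x z) ≤ sInf (Sset C x y) * sInf (Sset C y z) := by
    have h1 : ∀ s ∈ Sset C x y, sInf (Sset C x z) ≤ s * sInf (Sset C y z) := by
      intro s hs
      have h2 : ∀ t ∈ Sset C y z, sInf (Sset C x z) / s ≤ t := fun t ht =>
        by rw [div_le_iff₀ hs.1, mul_comm]; exact csInf_le (Sset_bddBelow C x z) (hmul s hs t ht)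
      have := le_csInf hyz h2
      rw [div_le_iff₀ hs.1] at this
      linarith [this]
    have h2 : ∀ s ∈ Sset C x y, sInf (Sset C x z) / sInf (Sset C y z) ≤ s := fun s hs => by
      rw [div_le_iff₀ hpos_yz]; exact h1 s hs
    have := le_csInf hxy h2
    rw [div_le_iff₀ hpos_yz] at this
    linarith [this]
  rw [funk_def, funk_def, funk_def]
  rcases le_or_gt (sInf (Sset C x z)) 1 with hle | hgt
  · have : Real.log (sInf (Sset C x z)) ≤ 0 := Real.log_nonpos
      (Real.sInf_nonneg fun l hl => hl.1.le) hle
    exact this.trans (by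
      have := add_nonneg (Real.log_nonneg h1xy) (Real.log_nonneg h1yz)
      linarith)
  · calc Real.log (sInf (Sset C x z)) ≤ Real.log (sInf (Sset C x y) * sInf (Sset C y z)) :=
        Real.log_le_log (lt_trans one_pos hgt) key
      _ = _ := Real.log_mul (by positivity) (by positivity)
/-- Bundle a function with a log-modulus of continuity as a bounded continuous function. -/
noncomputable def mkBCF {n : ℕ} (X : Set (Fin n → ℝ)) (εb Mf : ℝ) (hεb : 0 < εb)
    (g : (Fin n → ℝ) → ℝ)
    (hmod : ∀ p q : X, |g ↑p - g ↑q| ≤ Real.log (1 + dist (p : Fin n → ℝ) ↑q / εb))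
    (hbd : ∀ p q : X, |g ↑p - g ↑q| ≤ Mf) : BoundedContinuousFunction X ℝ :=
  BoundedContinuousFunction.mk
    ⟨fun p => g ↑p, by
      rw [Metric.continuous_iff]
      intro b ε hε
      refine ⟨εb * (Real.exp ε - 1), by
        have h1 : (1:ℝ) < Real.exp ε := Real.one_lt_exp_iff.2 hε
        nlinarith, fun a ha => ?_⟩
      have hda : dist a b = dist (a : Fin n → ℝ) ↑b := Subtype.dist_eq a b
      have hdnn : (0:ℝ) ≤ dist (a : Fin n → ℝ) ↑b := dist_nonneg
      have hpos : (0:ℝ) < 1 + dist (a : Fin n → ℝ) ↑b / εb := by positivity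
      have h2 : (1 + dist (a : Fin n → ℝ) ↑b / εb) < Real.exp ε := by
        rw [hda] at ha
        have : dist (a : Fin n → ℝ) ↑b / εb < Real.exp ε - 1 := by
          rw [div_lt_iff₀ hεb]
          linarith [ha]
        linarith
      calc dist (g ↑a) (g ↑b) = |g ↑a - g ↑b| := Real.dist_eq _ _
        _ ≤ Real.log (1 + dist (a : Fin n → ℝ) ↑b / εb) := hmod a b
        _ < Real.log (Real.exp ε) := Real.log_lt_log hpos h2
        _ = ε := Real.log_exp ε⟩
    ⟨Mf, fun p q => by simpa [Real.dist_eq] using hbd p q⟩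

lemma mkBCF_apply {n : ℕ} (X : Set (Fin n → ℝ)) (εb Mf : ℝ) (hεb : 0 < εb)
    (g : (Fin n → ℝ) → ℝ) (hmod) (hbd) (p : X) :
    mkBCF X εb Mf hεb g hmod hbd p = g ↑p := rfl
set_option maxHeartbeats 2000000 in
/-- Abstract discounted-approximation existence lemma for additive eigenvectors of
sup-norm-nonexpansive operators preserving Funk-Lipschitz functions. -/
lemma discounted {n : ℕ} (C : Set (Fin n → ℝ)) (X : Set (Fin n → ℝ))
    (hXc : IsCompact X) (x₀ : Fin n → ℝ) (hx₀ : x₀ ∈ X)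
    (Mf εb : ℝ) (hεb : 0 < εb)
    (hf0 : ∀ p ∈ X, ∀ q ∈ X, 0 ≤ funk C p q)
    (hfM : ∀ p ∈ X, ∀ q ∈ X, funk C p q ≤ Mf)
    (hfmod : ∀ p ∈ X, ∀ q ∈ X, funk C p q ≤ Real.log (1 + dist p q / εb))
    (Φ : ((Fin n → ℝ) → ℝ) → ((Fin n → ℝ) → ℝ))
    (H1 : ∀ (u u' : (Fin n → ℝ) → ℝ) (η M : ℝ), (∀ p ∈ X, |u p| ≤ M) →
        (∀ p ∈ X, |u' p| ≤ M) →
        (∀ p ∈ X, |u p - u' p| ≤ η) → ∀ x ∈ X, |Φ u x - Φ u' x| ≤ η)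
    (H2 : ∀ (u : (Fin n → ℝ) → ℝ) (M : ℝ), (∀ p ∈ X, |u p| ≤ M) →
        (∀ p ∈ X, ∀ q ∈ X, u p - u q ≤ funk C p q) →
        ∀ x ∈ X, ∀ y ∈ X, Φ u x - Φ u y ≤ funk C x y)
    (H3 : ∀ (u u' : (Fin n → ℝ) → ℝ) (c M : ℝ), (∀ p ∈ X, |u p| ≤ M) →
        (∀ p ∈ X, u' p = u p + c) → ∀ x ∈ X, Φ u' x = Φ u x + c)
    (H4 : ∃ Cb : ℝ, ∀ u : (Fin n → ℝ) → ℝ, (∀ p ∈ X, |u p| ≤ Mf) →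
        ∀ x ∈ X, |Φ u x| ≤ Cb) :
    ∃ (v : (Fin n → ℝ) → ℝ) (l : ℝ),
      (∀ x ∈ X, ∀ y ∈ X, v x - v y ≤ funk C x y) ∧ (∀ x ∈ X, Φ v x = l + v x) ∧
      (∀ p ∈ X, |v p| ≤ Mf) := by
  classical
  obtain ⟨Cb, hCb⟩ := H4
  have hMf0 : 0 ≤ Mf := le_trans (hf0 x₀ hx₀ x₀ hx₀) (hfM x₀ hx₀ x₀ hx₀)
  -- the extension operator
  set ex : (BoundedContinuousFunction X ℝ) → (Fin n → ℝ) → ℝ :=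
    fun u z => if h : z ∈ X then u ⟨z, h⟩ else 0 with hex
  have hexval : ∀ (u : BoundedContinuousFunction X ℝ) (p : X), ex u ↑p = u p := by
    intro u p; simp only [hex]; rw [dif_pos p.2]
  have hexbd : ∀ (u : BoundedContinuousFunction X ℝ) (θ : ℝ), |θ| ≤ 1 →
      ∀ p ∈ X, |ex (θ • u) p| ≤ ‖u‖ := by
    intro u θ hθ p hp
    have := hexval (θ • u) ⟨p, hp⟩
    rw [this]
    simp only [BoundedContinuousFunction.coe_smul, Pi.smul_apply, smul_eq_mul]
    rw [abs_mul]
    calc |θ| * |u ⟨p, hp⟩| ≤ 1 * ‖u ⟨p, hp⟩‖ := by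
          apply mul_le_mul hθ le_rfl (abs_nonneg _) zero_le_one
      _ ≤ ‖u‖ := by rw [one_mul]; exact BoundedContinuousFunction.norm_coe_le_norm u _
  -- modulus facts
  have modOf : ∀ g : (Fin n → ℝ) → ℝ, (∀ x ∈ X, ∀ y ∈ X, g x - g y ≤ funk C x y) →
      (∀ p q : X, |g ↑p - g ↑q| ≤ Real.log (1 + dist (p : Fin n → ℝ) ↑q / εb)) ∧
      (∀ p q : X, |g ↑p - g ↑q| ≤ Mf) := by
    intro g hg
    constructor
    · intro p q
      rw [abs_sub_le_iff]
      constructor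
      · exact (hg _ p.2 _ q.2).trans (hfmod _ p.2 _ q.2)
      · refine (hg _ q.2 _ p.2).trans ((hfmod _ q.2 _ p.2).trans ?_)
        rw [dist_comm]
    · intro p q
      rw [abs_sub_le_iff]
      exact ⟨(hg _ p.2 _ q.2).trans (hfM _ p.2 _ q.2),
        (hg _ q.2 _ p.2).trans (hfM _ q.2 _ p.2)⟩
  -- the Lipschitz cone P
  haveI : CompactSpace X := isCompact_iff_compactSpace.1 hXc
  set P : Set (BoundedContinuousFunction X ℝ) :=
    {u | ∀ p q : X, u p - u q ≤ funk C ↑p ↑q} with hP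
  have hevalc : ∀ p : X, Continuous fun u : BoundedContinuousFunction X ℝ => u p :=
    fun p => (BoundedContinuousFunction.lipschitz_eval_const p).continuous
  have hPclosed : IsClosed P := by
    have : P = ⋂ (p : X), ⋂ (q : X), {u : BoundedContinuousFunction X ℝ |
        u p - u q ≤ funk C ↑p ↑q} := by
      ext u; simp [hP, Set.mem_iInter]
    rw [this]
    exact isClosed_iInter fun p => isClosed_iInter fun q =>
      isClosed_le ((hevalc p).sub (hevalc q)) continuous_const
  have h0P : (0 : BoundedContinuousFunction X ℝ) ∈ P := by
    intro p q
    simp only [BoundedContinuousFunction.coe_zero, Pi.zero_apply, sub_zero]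
    exact hf0 _ p.2 _ q.2
  haveI : Nonempty P := ⟨⟨0, h0P⟩⟩
  haveI : CompleteSpace P := hPclosed.completeSpace_coe
  -- the discount factors
  set θ : ℕ → ℝ := fun k => 1 - ((k : ℝ) + 2)⁻¹ with hθdef
  have hθmem : ∀ k, 0 < θ k ∧ θ k < 1 := by
    intro k
    have h2 : (0:ℝ) < (k : ℝ) + 2 := by positivity
    constructor
    · have : ((k : ℝ) + 2)⁻¹ ≤ (2:ℝ)⁻¹ := by
        apply inv_anti₀ (by norm_num)
        simp [Nat.cast_nonneg]
      simp only [hθdef]; linarith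
    · simp only [hθdef]
      have : (0:ℝ) < ((k : ℝ) + 2)⁻¹ := by positivity
      linarith
  -- the Lipschitz property of Φ applied to scaled elements of P
  have hLipΦ : ∀ (s : ℝ), 0 ≤ s → s ≤ 1 → ∀ u : BoundedContinuousFunction X ℝ, u ∈ P →
      ∀ x ∈ X, ∀ y ∈ X, Φ (ex (s • u)) x - Φ (ex (s • u)) y ≤ funk C x y := by
    intro s hs0 hs1 u hu
    refine H2 _ ‖u‖ (fun p hp => hexbd u s (by rwa [abs_of_nonneg hs0]) p hp) ?_
    intro p hp q hq
    rw [hexval (s • u) ⟨p, hp⟩, hexval (s • u) ⟨q, hq⟩]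
    simp only [BoundedContinuousFunction.coe_smul, Pi.smul_apply, smul_eq_mul]
    rw [← mul_sub]
    calc s * (u ⟨p, hp⟩ - u ⟨q, hq⟩) ≤ s * funk C p q := by
          apply mul_le_mul_of_nonneg_left (hu ⟨p, hp⟩ ⟨q, hq⟩) hs0
      _ ≤ 1 * funk C p q := by
          apply mul_le_mul_of_nonneg_right hs1 (hf0 _ hp _ hq)
      _ = funk C p q := one_mul _
  -- the contraction maps
  set Θ : ℕ → P → P := fun k u =>
    ⟨mkBCF X εb Mf hεb (Φ (ex (θ k • (u : BoundedContinuousFunction X ℝ))))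
      (modOf _ (hLipΦ (θ k) (hθmem k).1.le (hθmem k).2.le ↑u u.2)).1
      (modOf _ (hLipΦ (θ k) (hθmem k).1.le (hθmem k).2.le ↑u u.2)).2,
      fun p q => hLipΦ (θ k) (hθmem k).1.le (hθmem k).2.le ↑u u.2 _ p.2 _ q.2⟩ with hΘ
  have hΘval : ∀ (k : ℕ) (u : P) (p : X),
      ((Θ k u : P) : BoundedContinuousFunction X ℝ) p
        = Φ (ex (θ k • (u : BoundedContinuousFunction X ℝ))) ↑p := fun k u p => rfl
  have hcontr : ∀ k, ContractingWith (Real.toNNReal (θ k)) (Θ k) := by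
    intro k
    constructor
    · rw [← NNReal.coe_lt_coe, Real.coe_toNNReal _ (hθmem k).1.le]
      exact (hθmem k).2
    · apply LipschitzWith.of_dist_le_mul
      intro u u'
      rw [Subtype.dist_eq, Real.coe_toNNReal _ (hθmem k).1.le]
      rw [BoundedContinuousFunction.dist_le (mul_nonneg (hθmem k).1.le dist_nonneg)]
      intro p
      rw [hΘval, hΘval, Real.dist_eq]
      refine H1 _ _ _ (max ‖(u : BoundedContinuousFunction X ℝ)‖
        ‖(u' : BoundedContinuousFunction X ℝ)‖) ?_ ?_ ?_ _ p.2
      · intro q hq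
        exact (hexbd _ (θ k) (by rw [abs_of_nonneg (hθmem k).1.le]; exact (hθmem k).2.le) q hq).trans
          (le_max_left _ _)
      · intro q hq
        exact (hexbd _ (θ k) (by rw [abs_of_nonneg (hθmem k).1.le]; exact (hθmem k).2.le) q hq).trans
          (le_max_right _ _)
      · intro q hq
        rw [hexval _ ⟨q, hq⟩, hexval _ ⟨q, hq⟩]
        simp only [BoundedContinuousFunction.coe_smul, Pi.smul_apply, smul_eq_mul]
        rw [← mul_sub, abs_mul, abs_of_nonneg (hθmem k).1.le]
        apply mul_le_mul_of_nonneg_left _ (hθmem k).1.le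
        have := BoundedContinuousFunction.dist_coe_le_dist (f := (u : BoundedContinuousFunction X ℝ))
          (g := (u' : BoundedContinuousFunction X ℝ)) ⟨q, hq⟩
        rw [Real.dist_eq] at this
        rw [Subtype.dist_eq]
        exact this
  -- fixed points
  set uu : ℕ → P := fun k => ContractingWith.fixedPoint (Θ k) (hcontr k) with huu
  have hufix : ∀ (k : ℕ) (p : X), ((uu k : P) : BoundedContinuousFunction X ℝ) p
      = Φ (ex (θ k • ((uu k : P) : BoundedContinuousFunction X ℝ))) ↑p := by
    intro k p
    have hfix : Θ k (uu k) = uu k := (hcontr k).fixedPoint_isFixedPt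
    conv_lhs => rw [← hfix]
    exact (hΘval k _ p)
  -- normalized fixed points
  set x0 : X := ⟨x₀, hx₀⟩ with hx0
  set cseq : ℕ → ℝ := fun k => ((uu k : P) : BoundedContinuousFunction X ℝ) x0 with hcseq
  set W : ℕ → BoundedContinuousFunction X ℝ := fun k =>
    ((uu k : P) : BoundedContinuousFunction X ℝ)
      - BoundedContinuousFunction.const X (cseq k) with hW
  have hWval : ∀ (k : ℕ) (p : X),
      W k p = ((uu k : P) : BoundedContinuousFunction X ℝ) p - cseq k := by
    intro k p
    simp [hW]
  have hWLip : ∀ k, ∀ p q : X, W k p - W k q ≤ funk C ↑p ↑q := by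
    intro k p q
    rw [hWval, hWval]
    have := (uu k).2 p q
    linarith
  have hWx0 : ∀ k, W k x0 = 0 := by
    intro k; rw [hWval]; simp [hcseq]
  have hWbd : ∀ k, ∀ p : X, |W k p| ≤ Mf := by
    intro k p
    have h1 : W k p - W k x0 ≤ funk C ↑p ↑x0 := hWLip k p x0
    have h2 : W k x0 - W k p ≤ funk C ↑x0 ↑p := hWLip k x0 p
    have h3 := hfM _ p.2 _ x0.2
    have h4 := hfM _ x0.2 _ p.2
    rw [hWx0] at h1 h2
    rw [abs_le]
    constructor <;> linarith
  have hexWbd : ∀ k, ∀ q ∈ X, |ex (θ k • W k) q| ≤ Mf := by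
    intro k q hq
    rw [hexval _ ⟨q, hq⟩]
    simp only [BoundedContinuousFunction.coe_smul, Pi.smul_apply, smul_eq_mul]
    rw [abs_mul, abs_of_nonneg (hθmem k).1.le]
    calc θ k * |W k ⟨q, hq⟩| ≤ 1 * Mf :=
        mul_le_mul (hθmem k).2.le (hWbd k _) (abs_nonneg _) zero_le_one
      _ = Mf := one_mul _
  -- the key relation
  have hrel : ∀ k, ∀ p : X, W k p = Φ (ex (θ k • W k)) ↑p - (1 - θ k) * cseq k := by
    intro k p
    have hshift := H3 (ex (θ k • W k))
      (ex (θ k • ((uu k : P) : BoundedContinuousFunction X ℝ))) (θ k * cseq k) Mf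
      (hexWbd k) ?_ ↑p p.2
    · rw [hWval, hufix k p, hshift]
      ring
    · intro q hq
      rw [hexval _ ⟨q, hq⟩, hexval _ ⟨q, hq⟩]
      simp only [BoundedContinuousFunction.coe_smul, Pi.smul_apply, smul_eq_mul]
      rw [hWval]
      ring
  set β : ℕ → ℝ := fun k => (1 - θ k) * cseq k with hβ
  have hβval : ∀ k, β k = Φ (ex (θ k • W k)) ↑x0 := by
    intro k
    have h := hrel k x0
    rw [hWx0] at h
    simp only [hβ]
    linarith
  have hβbd : ∀ k, |β k| ≤ Cb := by
    intro k
    rw [hβval]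
    exact hCb _ (hexWbd k) _ x0.2
  -- the compact set S
  set S : Set (BoundedContinuousFunction X ℝ) :=
    {w | (∀ p q : X, w p - w q ≤ funk C ↑p ↑q) ∧ ∀ p : X, |w p| ≤ Mf} with hS
  have hSclosed : IsClosed S := by
    have hrw : S = (⋂ (p : X), ⋂ (q : X), {w : BoundedContinuousFunction X ℝ |
        w p - w q ≤ funk C ↑p ↑q}) ∩ ⋂ (p : X), {w : BoundedContinuousFunction X ℝ |
        |w p| ≤ Mf} := by
      ext u; simp [hS, Set.mem_iInter]
    rw [hrw]
    exact ((isClosed_iInter fun p => isClosed_iInter fun q =>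
        isClosed_le ((hevalc p).sub (hevalc q)) continuous_const)).inter
      (isClosed_iInter fun p => isClosed_le (hevalc p).abs continuous_const)
  have hScomp : IsCompact S := by
    refine BoundedContinuousFunction.arzela_ascoli₂ (Set.Icc (-Mf) Mf) isCompact_Icc S hSclosed
      (fun f p hf => Set.mem_Icc.2 (abs_le.1 (hf.2 p))) ?_
    intro p
    rw [Metric.equicontinuousAt_iff_right]
    intro ε hε
    have hδ : 0 < εb * (Real.exp ε - 1) := by
      have := Real.one_lt_exp_iff.2 hε
      nlinarith
    filter_upwards [Metric.ball_mem_nhds p hδ] with q hq i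
    have key : |(i : BoundedContinuousFunction X ℝ) p
        - (i : BoundedContinuousFunction X ℝ) q|
        ≤ Real.log (1 + dist (p : Fin n → ℝ) ↑q / εb) := by
      rw [abs_sub_le_iff]
      exact ⟨(i.2.1 p q).trans (hfmod _ p.2 _ q.2),
        (i.2.1 q p).trans ((hfmod _ q.2 _ p.2).trans (by rw [dist_comm]))⟩
    have hdq : dist (p : Fin n → ℝ) ↑q < εb * (Real.exp ε - 1) := by
      rw [← Subtype.dist_eq, dist_comm]
      exact hq
    have hpos : (0:ℝ) < 1 + dist (p : Fin n → ℝ) ↑q / εb := by positivity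
    calc dist ((i : BoundedContinuousFunction X ℝ) p)
          ((i : BoundedContinuousFunction X ℝ) q)
        = |(i : BoundedContinuousFunction X ℝ) p
            - (i : BoundedContinuousFunction X ℝ) q| := Real.dist_eq _ _
      _ ≤ Real.log (1 + dist (p : Fin n → ℝ) ↑q / εb) := key
      _ < Real.log (Real.exp ε) := by
          apply Real.log_lt_log hpos
          have hlt : dist (p : Fin n → ℝ) ↑q / εb < Real.exp ε - 1 := by
            rw [div_lt_iff₀ hεb]
            nlinarith
          linarith
      _ = ε := Real.log_exp ε
  -- extract subsequences
  have hWS : ∀ k, W k ∈ S := fun k => ⟨hWLip k, hWbd k⟩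
  obtain ⟨w, hwS, φ, hφ, hφt⟩ := hScomp.tendsto_subseq hWS
  obtain ⟨l0, -, ψ, hψ, hβt⟩ := tendsto_subseq_of_bounded
    (Metric.isBounded_Icc (-Cb) Cb) (x := fun j => β (φ j))
    (fun j => Set.mem_Icc.2 (abs_le.1 (hβbd (φ j))))
  set κ : ℕ → ℕ := fun j => φ (ψ j) with hκ
  have hκmono : StrictMono κ := hφ.comp hψ
  have hκtend : Tendsto (fun j => W (κ j)) atTop (𝓝 w) := hφt.comp hψ.tendsto_atTop
  have hd0 : Tendsto (fun j => dist (W (κ j)) w) atTop (𝓝 0) := by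
    have := hκtend.dist (tendsto_const_nhds (x := w))
    simpa using this
  have hε0 : Tendsto (fun j : ℕ => ((j : ℝ) + 2)⁻¹) atTop (𝓝 0) :=
    tendsto_inv_atTop_zero.comp
      (tendsto_atTop_add_const_right _ 2 tendsto_natCast_atTop_atTop)
  have hεκ : Tendsto (fun j => 1 - θ (κ j)) atTop (𝓝 0) := by
    refine squeeze_zero (fun j => by have := (hθmem (κ j)).2; linarith) (fun j => ?_) hε0
    have h1 : 1 - θ (κ j) = ((κ j : ℝ) + 2)⁻¹ := by simp [hθdef]
    rw [h1]
    have h2 : (j : ℝ) ≤ (κ j : ℝ) := Nat.cast_le.2 hκmono.le_apply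
    apply inv_anti₀ (by positivity)
    linarith
  have htri : ∀ a b : ℝ, |a - b| ≤ |a| + |b| := fun a b => by
    calc |a - b| = |a + -b| := by ring_nf
      _ ≤ |a| + |-b| := abs_add_le _ _
      _ = |a| + |b| := by rw [abs_neg]
  refine ⟨ex w, l0, ?_, ?_, ?_⟩
  · intro x hxX y hyX
    rw [hexval w ⟨x, hxX⟩, hexval w ⟨y, hyX⟩]
    exact hwS.1 _ _
  · intro x hxX
    have t1 : Tendsto (fun j => W (κ j) ⟨x, hxX⟩) atTop (𝓝 (w ⟨x, hxX⟩)) :=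
      ((BoundedContinuousFunction.lipschitz_eval_const
        (⟨x, hxX⟩ : X)).continuous.tendsto w).comp hκtend
    have t2 : Tendsto (fun j => Φ (ex (θ (κ j) • W (κ j))) x) atTop (𝓝 (Φ (ex w) x)) := by
      rw [tendsto_iff_dist_tendsto_zero]
      refine squeeze_zero (fun j => dist_nonneg)
        (g := fun j => dist (W (κ j)) w + (1 - θ (κ j)) * Mf) (fun j => ?_) ?_
      · rw [Real.dist_eq]
        refine H1 _ _ _ Mf (hexWbd (κ j)) ?_ ?_ x hxX
        · intro q hq; rw [hexval w ⟨q, hq⟩]; exact hwS.2 _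
        · intro q hq
          rw [hexval _ ⟨q, hq⟩, hexval w ⟨q, hq⟩]
          simp only [BoundedContinuousFunction.coe_smul, Pi.smul_apply, smul_eq_mul]
          have h1 : |W (κ j) ⟨q, hq⟩ - w ⟨q, hq⟩| ≤ dist (W (κ j)) w := by
            have := BoundedContinuousFunction.dist_coe_le_dist
              (f := W (κ j)) (g := w) ⟨q, hq⟩
            rwa [Real.dist_eq] at this
          have h2 : |W (κ j) ⟨q, hq⟩| ≤ Mf := hWbd _ _
          have hθ1 := (hθmem (κ j)).1
          have hθ2 := (hθmem (κ j)).2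
          have hre : θ (κ j) * W (κ j) ⟨q, hq⟩ - w ⟨q, hq⟩
              = (W (κ j) ⟨q, hq⟩ - w ⟨q, hq⟩) - ((1 - θ (κ j)) * W (κ j) ⟨q, hq⟩) := by
            ring
          rw [hre]
          refine (htri _ _).trans ?_
          have h3 : |(1 - θ (κ j)) * W (κ j) ⟨q, hq⟩| ≤ (1 - θ (κ j)) * Mf := by
            rw [abs_mul, abs_of_nonneg (by linarith : (0:ℝ) ≤ 1 - θ (κ j))]
            exact mul_le_mul_of_nonneg_left h2 (by linarith)
          linarith
      · have := hd0.add (hεκ.mul (tendsto_const_nhds (x := Mf)))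
        simpa using this
    have t3 : Tendsto (fun j => β (κ j)) atTop (𝓝 l0) := hβt
    have t4 : Tendsto (fun j => W (κ j) ⟨x, hxX⟩) atTop (𝓝 (Φ (ex w) x - l0)) := by
      have hco : (fun j => W (κ j) ⟨x, hxX⟩)
          = fun j => Φ (ex (θ (κ j) • W (κ j))) x - β (κ j) := by
        funext j
        exact hrel (κ j) ⟨x, hxX⟩
      rw [hco]
      exact t2.sub t3
    have huniq := tendsto_nhds_unique t1 t4
    rw [hexval w ⟨x, hxX⟩]
    linarith
  · intro p hp
    rw [hexval w ⟨p, hp⟩]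
    exact hwS.2 _

/-- under Assumption 1 and the small cone assumption, each of `F`,
`F_h^+ = F I_h^+ R_h` and `F̂_h^+ = R_h F I_h^+` admits a distance-like additive
eigenvector. -/
theorem stmt_14
    {n : ℕ} (C : Set (Fin n → ℝ))
    (hCclosed : IsClosed C) (hCconv : Convex ℝ C)
    (hCcone : ∀ x ∈ C, ∀ r : ℝ, 0 ≤ r → r • x ∈ C)
    (hCpointed : ∀ x ∈ C, -x ∈ C → x = 0)
    (estar : Fin n → ℝ) (hestar : estar ∈ interior (dualCone C))
    {E : Type*} [MetricSpace E]
    (A B : Set E) (hAc : IsCompact A) (hAne : A.Nonempty)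
    (hBc : IsCompact B) (hBne : B.Nonempty)
    (T : E → E → (Fin n → ℝ) → (Fin n → ℝ))
    (hTmaps : ∀ a ∈ A, ∀ b ∈ B, ∀ x ∈ interior C, T a b x ∈ interior C)
    (hTnexp : ∀ a ∈ A, ∀ b ∈ B, ∀ x ∈ interior C, ∀ y ∈ interior C,
      funk C (T a b x) (T a b y) ≤ funk C x y)
    (hconta : ∀ x ∈ interior C, ∀ b ∈ B, ContinuousOn (fun a => T a b x) A)
    (hcontb : ∀ x ∈ interior C, ∀ a ∈ A, ContinuousOn (fun b => T a b x) B)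
    (hcomp : ∀ Kc : Set (Fin n → ℝ), Kc ⊆ interior C → IsCompact Kc →
      IsCompact {z | ∃ a ∈ A, ∃ b ∈ B, ∃ x ∈ Kc, z = T a b x})
    (K : Set (Fin n → ℝ)) (hKclosed : IsClosed K)
    (hKcone : ∀ x ∈ K, ∀ r : ℝ, 0 ≤ r → r • x ∈ K) (hKC : K ⊆ C)
    (hTK : ∀ a ∈ A, ∀ b ∈ B, ∀ x ∈ K, T a b x ∈ K)
    (hXsub : crossSec K estar ⊆ interior C)
    (hXne : (crossSec K estar).Nonempty)
    (h : ℝ) (hh : 0 < h)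
    (Xh : Finset (Fin n → ℝ)) (hXhne : Xh.Nonempty)
    (hXhsub : ↑Xh ⊆ crossSec K estar)
    (hcover : ∀ x ∈ crossSec K estar, ∃ y ∈ Xh, funk C x y + funk C y x < h)
 :
    (∃ (v : (Fin n → ℝ) → ℝ) (l : ℝ),
      (∀ x ∈ crossSec K estar, ∀ y ∈ crossSec K estar, v x - v y ≤ funk C x y) ∧
      (∀ x ∈ crossSec K estar, Fop A B T estar v x = l + v x) ∧
      (∃ x₀ ∈ crossSec K estar, ∃ α : ℝ, ∀ x ∈ crossSec K estar,
        α + funk C x x₀ ≤ v x)) ∧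
    (∃ (v : (Fin n → ℝ) → ℝ) (l : ℝ),
      (∀ x ∈ crossSec K estar, ∀ y ∈ crossSec K estar, v x - v y ≤ funk C x y) ∧
      (∀ x ∈ crossSec K estar, Fop A B T estar (Ih C Xh hXhne v) x = l + v x) ∧
      (∃ x₀ ∈ crossSec K estar, ∃ α : ℝ, ∀ x ∈ crossSec K estar,
        α + funk C x x₀ ≤ v x)) ∧
    (∃ (v : (Fin n → ℝ) → ℝ) (l : ℝ),
      (∀ x ∈ Xh, ∀ y ∈ Xh, v x - v y ≤ funk C x y) ∧
      (∀ x ∈ Xh, Fop A B T estar (Ih C Xh hXhne v) x = l + v x) ∧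
      (∃ x₀ ∈ Xh, ∃ α : ℝ, ∀ x ∈ Xh, α + funk C x x₀ ≤ v x)) := by
  classical
  obtain ⟨x₀, hx₀⟩ := hXne
  set X := crossSec K estar with hX
  have hXK : ∀ x ∈ X, x ∈ K := fun x hx => hx.1
  have hXdot : ∀ x ∈ X, dotProduct x estar = 1 := fun x hx => hx.2
  have hXC : ∀ x ∈ X, x ∈ C := fun x hx => hKC hx.1
  have hdual : ∀ z ∈ C, 0 ≤ dotProduct z estar := interior_subset hestar
  have h0C : (0 : Fin n → ℝ) ∈ C := by
    have := hCcone x₀ (hXC x₀ hx₀) 0 le_rfl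
    simpa using this
  have hadd : ∀ u ∈ C, ∀ w ∈ C, u + w ∈ C := by
    intro u hu w hw
    have hmid : (1/2 : ℝ) • u + (1/2 : ℝ) • w ∈ C :=
      hCconv hu hw (by norm_num) (by norm_num) (by norm_num)
    have h2 := hCcone _ hmid 2 (by norm_num)
    rw [smul_add, smul_smul, smul_smul] at h2
    norm_num at h2
    exact h2
  -- dual pairing bound
  obtain ⟨ρ, hρ, hball⟩ := Metric.mem_nhds_iff.1 (mem_interior_iff_mem_nhds.1 hestar)
  have hpair : ∀ z ∈ C, ρ/2 * ‖z‖ ≤ dotProduct z estar := by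
    intro z hz
    rcases eq_or_ne z 0 with rfl | hz0
    · simp [zero_dotProduct]
    · have hn : ∃ i, ∀ j, |z j| ≤ |z i| := by
        rcases isEmpty_or_nonempty (Fin n) with hE | hNE
        · exact absurd (funext fun i => (hE.false i).elim) hz0
        · obtain ⟨i, hi⟩ := Finite.exists_max fun i => |z i|
          exact ⟨i, hi⟩
      obtain ⟨i, hi⟩ := hn
      set g : Fin n → ℝ := Pi.single i (if 0 ≤ z i then (1:ℝ) else -1) with hg
      have hdotg : dotProduct z g = |z i| := by
        rw [hg, dotProduct_single]
        split_ifs with h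
        · rw [mul_one, abs_of_nonneg h]
        · rw [mul_neg_one, abs_of_neg (lt_of_not_ge h)]
      have hgnorm : ‖g‖ ≤ 1 := by
        rw [pi_norm_le_iff_of_nonneg zero_le_one]
        intro j
        rw [hg]
        rcases eq_or_ne j i with rfl | hne
        · rw [Pi.single_eq_same]; split_ifs <;> simp
        · rw [Pi.single_eq_of_ne hne]; simp
      have hmem : estar - (ρ/2) • g ∈ dualCone C := by
        apply hball
        rw [Metric.mem_ball, dist_eq_norm]
        have heq : estar - (ρ/2) • g - estar = -((ρ/2) • g) := by abel
        rw [heq, norm_neg, norm_smul, Real.norm_eq_abs, abs_of_pos (by linarith)]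
        nlinarith
      have h0 := hmem z hz
      rw [dotProduct_sub, dotProduct_smul, hdotg, smul_eq_mul] at h0
      have hzn : ‖z‖ ≤ |z i| := by
        rw [pi_norm_le_iff_of_nonneg (abs_nonneg _)]
        intro j
        rw [Real.norm_eq_abs]
        exact hi j
      nlinarith [hzn]
  have hRX : ∀ x ∈ X, ‖x‖ ≤ 2/ρ := by
    intro x hx
    have h1 := hpair x (hXC x hx)
    rw [hXdot x hx] at h1
    rw [le_div_iff₀ hρ]
    nlinarith
  -- X is compact
  have hdotc : Continuous fun x : Fin n → ℝ => dotProduct x estar := by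
    simp only [dotProduct]
    exact continuous_finset_sum _ fun i _ => (continuous_apply i).mul continuous_const
  have hXclosed : IsClosed X := by
    have hXeq : X = K ∩ {x | dotProduct x estar = 1} := rfl
    rw [hXeq]
    exact hKclosed.inter (isClosed_eq hdotc continuous_const)
  have hXcomp : IsCompact X :=
    (isCompact_closedBall (0 : Fin n → ℝ) (2/ρ)).of_isClosed_subset hXclosed
      (fun x hx => mem_closedBall_zero_iff.2 (hRX x hx))
  -- uniform interior ball radius
  obtain ⟨εt, hεt, hthick⟩ := hXcomp.exists_thickening_subset_open isOpen_interior hXsub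
  set εb : ℝ := εt/2 with hεbdef
  have hεb : 0 < εb := by rw [hεbdef]; linarith
  have hballX : ∀ y ∈ X, Metric.closedBall y εb ⊆ C := by
    intro y hy z hz
    apply interior_subset
    apply hthick
    rw [Metric.mem_thickening_iff]
    exact ⟨y, hy, lt_of_le_of_lt (Metric.mem_closedBall.1 hz) (by rw [hεbdef]; linarith)⟩
  -- funk basics on X
  have hSne : ∀ (x : Fin n → ℝ), ∀ y ∈ X, (1 + ‖x - y‖ / εb) ∈ Sset C x y :=
    fun x y hy => Sset_mem_of_ball h0C hCcone hεb (hballX y hy)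
  have hSone : ∀ x ∈ X, ∀ y ∈ X, ∀ l ∈ Sset C x y, 1 ≤ l := by
    intro x hx y hy l hl
    have h1 := Sset_lower hdual (by rw [hXdot y hy]; norm_num) hl
    rw [hXdot x hx, hXdot y hy] at h1
    simpa using h1
  have hsInf1 : ∀ x ∈ X, ∀ y ∈ X, 1 ≤ sInf (Sset C x y) := fun x hx y hy =>
    le_csInf ⟨_, hSne x y hy⟩ (hSone x hx y hy)
  have hfunk0 : ∀ x ∈ X, ∀ y ∈ X, 0 ≤ funk C x y := fun x hx y hy => by
    rw [funk_def]; exact Real.log_nonneg (hsInf1 x hx y hy)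
  have hfmod : ∀ x ∈ X, ∀ y ∈ X, funk C x y ≤ Real.log (1 + dist x y / εb) := by
    intro x hx y hy
    rw [funk_def, dist_eq_norm]
    apply Real.log_le_log (lt_of_lt_of_le one_pos (hsInf1 x hx y hy))
    exact csInf_le (Sset_bddBelow C x y) (hSne x y hy)
  set Mf : ℝ := Real.log (1 + (2/ρ + 2/ρ) / εb) with hMfdef
  have hfM : ∀ x ∈ X, ∀ y ∈ X, funk C x y ≤ Mf := by
    intro x hx y hy
    refine (hfmod x hx y hy).trans ?_
    rw [hMfdef]
    apply Real.log_le_log (by positivity)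
    have h1 : dist x y ≤ 2/ρ + 2/ρ := by
      rw [dist_eq_norm]
      exact (norm_sub_le x y).trans (add_le_add (hRX x hx) (hRX y hy))
    gcongr
  have hMf0 : 0 ≤ Mf := le_trans (hfunk0 x₀ hx₀ x₀ hx₀) (hfM x₀ hx₀ x₀ hx₀)
  have htriangle : ∀ x ∈ X, ∀ y ∈ X, ∀ z ∈ X, funk C x z ≤ funk C x y + funk C y z :=
    fun x hx y hy z hz => funk_triangle hCcone hadd ⟨_, hSne x y hy⟩ ⟨_, hSne y z hz⟩
      (hsInf1 x hx y hy) (hsInf1 y hy z hz)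
  -- 0 is not in the interior of C
  have h0int : (0 : Fin n → ℝ) ∉ interior C := by
    intro h0
    obtain ⟨r, hr, hb⟩ := Metric.isOpen_iff.1 isOpen_interior 0 h0
    have hx0ne : x₀ ≠ 0 := by
      intro h
      have h1 := hXdot x₀ hx₀
      rw [h, zero_dotProduct] at h1
      norm_num at h1
    have hnx : 0 < ‖x₀‖ := norm_pos_iff.2 hx0ne
    set c : ℝ := r / (2 * ‖x₀‖) with hc
    have hcpos : 0 < c := by positivity
    have hnc : ‖c • x₀‖ < r := by
      rw [norm_smul, Real.norm_eq_abs, abs_of_pos hcpos]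
      have hce : c * ‖x₀‖ = r / 2 := by
        rw [hc]
        field_simp
      rw [hce]
      linarith
    have h1 : c • x₀ ∈ C := interior_subset (hb (by rwa [Metric.mem_ball, dist_zero_right]))
    have h2 : -(c • x₀) ∈ C := interior_subset (hb (by
      rwa [Metric.mem_ball, dist_zero_right, norm_neg]))
    have h3 := hCpointed _ h1 h2
    rw [smul_eq_zero] at h3
    rcases h3 with h3 | h3
    · exact hcpos.ne' h3
    · exact hx0ne h3
  have hdotpos : ∀ z, z ∈ interior C → 0 < dotProduct z estar := by
    intro z hz
    have hzC := interior_subset hz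
    have hzne : z ≠ 0 := fun h => h0int (h ▸ hz)
    have hzn : 0 < ‖z‖ := norm_pos_iff.2 hzne
    nlinarith [hpair z hzC]
  -- the image set Z
  set Z : Set (Fin n → ℝ) := {z | ∃ a ∈ A, ∃ b ∈ B, ∃ x ∈ X, z = T a b x} with hZ
  have hZc : IsCompact Z := hcomp X hXsub hXcomp
  obtain ⟨a₀, ha₀⟩ := hAne
  obtain ⟨b₀, hb₀⟩ := hBne
  have hZne : Z.Nonempty := ⟨T a₀ b₀ x₀, a₀, ha₀, b₀, hb₀, x₀, hx₀, rfl⟩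
  have hZint : ∀ z ∈ Z, z ∈ interior C := by
    rintro z ⟨a, ha, b, hb, x, hx, rfl⟩
    exact hTmaps a ha b hb x (hXsub hx)
  have hZK : ∀ z ∈ Z, z ∈ K := by
    rintro z ⟨a, ha, b, hb, x, hx, rfl⟩
    exact hTK a ha b hb x (hXK x hx)
  obtain ⟨zmin, hzmin, hmin⟩ := hZc.exists_isMinOn hZne hdotc.continuousOn
  obtain ⟨zmax, hzmax, hmax⟩ := hZc.exists_isMaxOn hZne hdotc.continuousOn
  have hs₀ : 0 < dotProduct zmin estar := hdotpos _ (hZint _ hzmin)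
  set L₁ : ℝ := max |Real.log (dotProduct zmin estar)|
    |Real.log (dotProduct zmax estar)| with hL₁
  have hlogbd : ∀ z ∈ Z, |Real.log (dotProduct z estar)| ≤ L₁ := by
    intro z hz
    have h1 : dotProduct zmin estar ≤ dotProduct z estar := hmin hz
    have h2 : dotProduct z estar ≤ dotProduct zmax estar := hmax hz
    have hz0 : 0 < dotProduct z estar := hdotpos _ (hZint z hz)
    rw [abs_le]
    constructor
    · calc -L₁ ≤ -|Real.log (dotProduct zmin estar)| := by
            rw [hL₁, neg_le_neg_iff]; exact le_max_left _ _
        _ ≤ Real.log (dotProduct zmin estar) := neg_abs_le _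
        _ ≤ Real.log (dotProduct z estar) := Real.log_le_log hs₀ h1
    · calc Real.log (dotProduct z estar)
          ≤ Real.log (dotProduct zmax estar) := Real.log_le_log hz0 h2
        _ ≤ |Real.log (dotProduct zmax estar)| := le_abs_self _
        _ ≤ L₁ := le_max_right _ _
  have hTZ : ∀ (a : A) (b : B), ∀ x ∈ X, T ↑a ↑b x ∈ Z :=
    fun a b x hx => ⟨↑a, a.2, ↑b, b.2, x, hx, rfl⟩
  have hnorX : ∀ z ∈ Z, (dotProduct z estar)⁻¹ • z ∈ X := by
    intro z hz
    have hdz := hdotpos _ (hZint z hz)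
    refine ⟨hKcone z (hZK z hz) _ (inv_nonneg.2 hdz.le), ?_⟩
    rw [smul_dotProduct, smul_eq_mul, inv_mul_cancel₀ hdz.ne']
  haveI : Nonempty ↥A := ⟨⟨a₀, ha₀⟩⟩
  haveI : Nonempty ↥B := ⟨⟨b₀, hb₀⟩⟩
  -- the bracket
  set brk : ((Fin n → ℝ) → ℝ) → (Fin n → ℝ) → ↥A → ↥B → ℝ := fun v x a b =>
    Real.log (dotProduct (T ↑a ↑b x) estar) +
      v ((dotProduct (T ↑a ↑b x) estar)⁻¹ • T ↑a ↑b x) with hbrk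
  have Fop_eq : ∀ (v : (Fin n → ℝ) → ℝ) (x : Fin n → ℝ),
      Fop A B T estar v x = ⨅ a : A, ⨆ b : B, brk v x a b := fun v x => rfl
  have hbrkbd : ∀ (v : (Fin n → ℝ) → ℝ) (Mv : ℝ), (∀ p ∈ X, |v p| ≤ Mv) →
      ∀ x ∈ X, ∀ (a : A) (b : B), |brk v x a b| ≤ L₁ + Mv := by
    intro v Mv hv x hx a b
    rw [hbrk]
    refine (abs_add_le _ _).trans (add_le_add (hlogbd _ (hTZ a b x hx))
      (hv _ (hnorX _ (hTZ a b x hx))))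
  -- nonexpansiveness of Fop
  have FopH1 : ∀ (u u' : (Fin n → ℝ) → ℝ) (η M : ℝ), (∀ p ∈ X, |u p| ≤ M) →
      (∀ p ∈ X, |u' p| ≤ M) → (∀ p ∈ X, |u p - u' p| ≤ η) →
      ∀ x ∈ X, |Fop A B T estar u x - Fop A B T estar u' x| ≤ η := by
    intro u u' η M hu hu' hd x hx
    have key : ∀ (w w' : (Fin n → ℝ) → ℝ), (∀ p ∈ X, |w p| ≤ M) → (∀ p ∈ X, |w' p| ≤ M) →
        (∀ p ∈ X, w p - w' p ≤ η) →
        Fop A B T estar w x ≤ Fop A B T estar w' x + η := by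
      intro w w' hw hw' hww'
      rw [Fop_eq, Fop_eq]
      refine infSup_le (M := L₁ + M) (fun a b => hbrkbd w M hw x hx a b)
        (fun a b => hbrkbd w' M hw' x hx a b) ?_
      intro a b
      rw [hbrk]
      have := hww' _ (hnorX _ (hTZ a b x hx))
      dsimp only
      linarith
    rw [abs_sub_le_iff]
    constructor
    · have hkey := key u u' hu hu' (fun p hp => (le_abs_self _).trans (hd p hp))
      linarith
    · have hkey := key u' u hu' hu (fun p hp => by
        have h2 := hd p hp
        rw [abs_sub_comm] at h2
        exact (le_abs_self _).trans h2)
      linarith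
  -- Funk-Lipschitz property of Fop
  have FopH2 : ∀ (u : (Fin n → ℝ) → ℝ) (M : ℝ), (∀ p ∈ X, |u p| ≤ M) →
      (∀ p ∈ X, ∀ q ∈ X, u p - u q ≤ funk C p q) →
      ∀ x ∈ X, ∀ y ∈ X, Fop A B T estar u x - Fop A B T estar u y ≤ funk C x y := by
    intro u M hbd hLip x hx y hy
    have hkey : (⨅ a : A, ⨆ b : B, brk u x a b)
        ≤ (⨅ a : A, ⨆ b : B, brk u y a b) + funk C x y := by
      refine infSup_le (M := L₁ + M) (fun a b => hbrkbd u M hbd x hx a b)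
        (fun a b => hbrkbd u M hbd y hy a b) ?_
      intro a b
      have hz₁ : T ↑a ↑b x ∈ Z := hTZ a b x hx
      have hz₂ : T ↑a ↑b y ∈ Z := hTZ a b y hy
      have hs₁ : 0 < dotProduct (T ↑a ↑b x) estar := hdotpos _ (hZint _ hz₁)
      have hs₂ : 0 < dotProduct (T ↑a ↑b y) estar := hdotpos _ (hZint _ hz₂)
      have hn₁ : (dotProduct (T ↑a ↑b x) estar)⁻¹ • T ↑a ↑b x ∈ X := hnorX _ hz₁
      have hn₂ : (dotProduct (T ↑a ↑b y) estar)⁻¹ • T ↑a ↑b y ∈ X := hnorX _ hz₂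
      have hSnez : (Sset C ((dotProduct (T ↑a ↑b x) estar)⁻¹ • T ↑a ↑b x)
          ((dotProduct (T ↑a ↑b y) estar)⁻¹ • T ↑a ↑b y)).Nonempty :=
        ⟨_, hSne _ _ hn₂⟩
      have hposz : 0 < sInf (Sset C (T ↑a ↑b x) (T ↑a ↑b y)) := by
        have hne2 : (Sset C (T ↑a ↑b x) (T ↑a ↑b y)).Nonempty := by
          rw [Sset_scale hCcone hs₁ hs₂] at hSnez
          obtain ⟨m, m', hm', rfl⟩ := hSnez
          exact ⟨m', hm'⟩
        refine lt_of_lt_of_le (div_pos hs₁ hs₂) (le_csInf hne2 ?_)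
        exact fun l hl => Sset_lower hdual hs₂ hl
      have hkey := funk_smul hCcone hs₁ hs₂ hposz
      have hLipn := hLip _ hn₁ _ hn₂
      rw [hkey] at hLipn
      have hnexp := hTnexp ↑a a.2 ↑b b.2 x (hXsub hx) y (hXsub hy)
      have hlogdiv : Real.log (dotProduct (T ↑a ↑b y) estar
          / dotProduct (T ↑a ↑b x) estar)
          = Real.log (dotProduct (T ↑a ↑b y) estar)
            - Real.log (dotProduct (T ↑a ↑b x) estar) :=
        Real.log_div hs₂.ne' hs₁.ne'
      rw [hlogdiv] at hLipn
      rw [hbrk]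
      dsimp only
      linarith
    rw [Fop_eq, Fop_eq]
    linarith
  -- shift property of Fop
  have FopH3 : ∀ (u u' : (Fin n → ℝ) → ℝ) (c M : ℝ), (∀ p ∈ X, |u p| ≤ M) →
      (∀ p ∈ X, u' p = u p + c) → ∀ x ∈ X,
      Fop A B T estar u' x = Fop A B T estar u x + c := by
    intro u u' c M hbd hshift x hx
    rw [Fop_eq, Fop_eq]
    have hbrkeq : ∀ (a : A) (b : B), brk u' x a b = brk u x a b + c := by
      intro a b
      rw [hbrk]
      dsimp only
      rw [hshift _ (hnorX _ (hTZ a b x hx))]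
      ring
    calc (⨅ a : A, ⨆ b : B, brk u' x a b)
        = ⨅ a : A, ⨆ b : B, (brk u x a b + c) := by simp only [hbrkeq]
      _ = (⨅ a : A, ⨆ b : B, brk u x a b) + c :=
          infSup_add (M := L₁ + M) (fun a b => hbrkbd u M hbd x hx a b)
  -- boundedness of Fop
  have FopH4 : ∀ (u : (Fin n → ℝ) → ℝ) (M : ℝ), (∀ p ∈ X, |u p| ≤ M) →
      ∀ x ∈ X, |Fop A B T estar u x| ≤ L₁ + M := by
    intro u M hu x hx
    have := infSup_mem_Icc (f := brk u x) (a := -(L₁ + M)) (b := L₁ + M)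
      (fun a b => abs_le.1 (hbrkbd u M hu x hx a b))
    rw [Fop_eq, abs_le]
    exact this
  -- interpolation operator lemmas
  have Ih_eq : ∀ (v : (Fin n → ℝ) → ℝ) (x : Fin n → ℝ),
      Ih C Xh hXhne v x = Xh.inf' hXhne (fun y => v y + funk C x y) := fun v x => rfl
  have hXhX : ∀ y ∈ Xh, y ∈ X := fun y hy => hXhsub hy
  have IhLip : ∀ (v : (Fin n → ℝ) → ℝ), ∀ x ∈ X, ∀ x' ∈ X,
      Ih C Xh hXhne v x - Ih C Xh hXhne v x' ≤ funk C x x' := by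
    intro v x hx x' hx'
    obtain ⟨y', hy'mem, hy'⟩ := Finset.exists_mem_eq_inf' hXhne
      (fun y => v y + funk C x' y)
    rw [Ih_eq, Ih_eq, hy']
    have h1 : Xh.inf' hXhne (fun y => v y + funk C x y) ≤ v y' + funk C x y' :=
      Finset.inf'_le _ hy'mem
    have h2 : funk C x y' ≤ funk C x x' + funk C x' y' :=
      htriangle x hx x' hx' y' (hXhX y' hy'mem)
    linarith
  have IhNexp : ∀ (u u' : (Fin n → ℝ) → ℝ) (η : ℝ), 0 ≤ η → (∀ p ∈ X, |u p - u' p| ≤ η) →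
      ∀ x : Fin n → ℝ, |Ih C Xh hXhne u x - Ih C Xh hXhne u' x| ≤ η := by
    intro u u' η hη hd x
    have key : ∀ (w w' : (Fin n → ℝ) → ℝ), (∀ p ∈ X, w p - w' p ≤ η) →
        Ih C Xh hXhne w x ≤ Ih C Xh hXhne w' x + η := by
      intro w w' hww'
      obtain ⟨y', hy'mem, hy'⟩ := Finset.exists_mem_eq_inf' hXhne
        (fun y => w' y + funk C x y)
      rw [Ih_eq, Ih_eq, hy']
      have h1 : Xh.inf' hXhne (fun y => w y + funk C x y) ≤ w y' + funk C x y' :=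
        Finset.inf'_le _ hy'mem
      have h2 := hww' y' (hXhX y' hy'mem)
      linarith
    rw [abs_sub_le_iff]
    constructor
    · have hkey := key u u' (fun p hp => (le_abs_self _).trans (hd p hp))
      linarith
    · have hkey := key u' u (fun p hp => by
        have h2 := hd p hp
        rw [abs_sub_comm] at h2
        exact (le_abs_self _).trans h2)
      linarith
  have IhBd : ∀ (u : (Fin n → ℝ) → ℝ) (M : ℝ), (∀ p ∈ X, |u p| ≤ M) →
      ∀ x ∈ X, |Ih C Xh hXhne u x| ≤ M + Mf := by
    intro u M hu x hx
    obtain ⟨y₀, hy₀⟩ := hXhne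
    rw [abs_le]
    constructor
    · rw [Ih_eq]
      apply Finset.le_inf'
      intro y hy
      have h1 := abs_le.1 (hu y (hXhX y hy))
      have h2 := hfunk0 x hx y (hXhX y hy)
      linarith [hMf0]
    · rw [Ih_eq]
      refine (Finset.inf'_le _ hy₀).trans ?_
      have h1 := abs_le.1 (hu y₀ (hXhX y₀ hy₀))
      have h2 := hfM x hx y₀ (hXhX y₀ hy₀)
      linarith
  have IhShift : ∀ (u u' : (Fin n → ℝ) → ℝ) (c : ℝ), (∀ p ∈ X, u' p = u p + c) →
      ∀ x : Fin n → ℝ, Ih C Xh hXhne u' x = Ih C Xh hXhne u x + c := by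
    intro u u' c h x
    obtain ⟨y₁, hy₁, he₁⟩ := Finset.exists_mem_eq_inf' hXhne (fun y => u y + funk C x y)
    obtain ⟨y₂, hy₂, he₂⟩ := Finset.exists_mem_eq_inf' hXhne (fun y => u' y + funk C x y)
    rw [Ih_eq, Ih_eq]
    apply le_antisymm
    · rw [he₁]
      refine le_trans (Finset.inf'_le _ hy₁) ?_
      rw [h y₁ (hXhX y₁ hy₁)]
      ring_nf
      exact le_rfl
    · rw [he₂]
      have h1 : Xh.inf' hXhne (fun y => u y + funk C x y) ≤ u y₂ + funk C x y₂ :=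
        Finset.inf'_le _ hy₂
      rw [h y₂ (hXhX y₂ hy₂)]
      linarith
  -- distance-like is automatic from the Lipschitz property
  have hdlike : ∀ (v : (Fin n → ℝ) → ℝ), (∀ x ∈ X, ∀ y ∈ X, v x - v y ≤ funk C x y) →
      ∀ z ∈ X, ∀ x ∈ X, (v z - 2 * Mf) + funk C x z ≤ v x := by
    intro v hv z hz x hx
    have h1 := hv z hz x hx
    have h2 := hfM z hz x hx
    have h3 := hfM x hx z hz
    linarith
  -- first operator : F itself
  obtain ⟨v₁, l₁, hLip₁, heig₁, hbd₁⟩ := discounted C X hXcomp x₀ hx₀ Mf εb hεb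
    hfunk0 hfM hfmod (fun u => Fop A B T estar u) FopH1 FopH2 FopH3
    ⟨L₁ + Mf, fun u hu x hx => FopH4 u Mf hu x hx⟩
  -- second operator : F ∘ I_h
  have GH1 : ∀ (u u' : (Fin n → ℝ) → ℝ) (η M : ℝ), (∀ p ∈ X, |u p| ≤ M) →
      (∀ p ∈ X, |u' p| ≤ M) → (∀ p ∈ X, |u p - u' p| ≤ η) → ∀ x ∈ X,
      |Fop A B T estar (Ih C Xh hXhne u) x - Fop A B T estar (Ih C Xh hXhne u') x| ≤ η := by
    intro u u' η M hu hu' hd x hx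
    have hη : 0 ≤ η := le_trans (abs_nonneg _) (hd x₀ hx₀)
    exact FopH1 _ _ η (M + Mf) (IhBd u M hu) (IhBd u' M hu')
      (fun p _ => IhNexp u u' η hη hd p) x hx
  have GH2 : ∀ (u : (Fin n → ℝ) → ℝ) (M : ℝ), (∀ p ∈ X, |u p| ≤ M) →
      (∀ p ∈ X, ∀ q ∈ X, u p - u q ≤ funk C p q) → ∀ x ∈ X, ∀ y ∈ X,
      Fop A B T estar (Ih C Xh hXhne u) x - Fop A B T estar (Ih C Xh hXhne u) y
        ≤ funk C x y := by
    intro u M hu _ x hx y hy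
    exact FopH2 _ (M + Mf) (IhBd u M hu) (IhLip u) x hx y hy
  have GH3 : ∀ (u u' : (Fin n → ℝ) → ℝ) (c M : ℝ), (∀ p ∈ X, |u p| ≤ M) →
      (∀ p ∈ X, u' p = u p + c) → ∀ x ∈ X,
      Fop A B T estar (Ih C Xh hXhne u') x = Fop A B T estar (Ih C Xh hXhne u) x + c := by
    intro u u' c M hu hsh x hx
    exact FopH3 _ _ c (M + Mf) (IhBd u M hu) (fun p _ => IhShift u u' c hsh p) x hx
  obtain ⟨v₃, l₃, hLip₃, heig₃, hbd₃⟩ := discounted C X hXcomp x₀ hx₀ Mf εb hεb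
    hfunk0 hfM hfmod (fun u => Fop A B T estar (Ih C Xh hXhne u)) GH1 GH2 GH3
    ⟨L₁ + (Mf + Mf), fun u hu x hx => FopH4 _ (Mf + Mf) (IhBd u Mf hu) x hx⟩
  refine ⟨⟨v₁, l₁, hLip₁, heig₁, x₀, hx₀, v₁ x₀ - 2 * Mf, hdlike v₁ hLip₁ x₀ hx₀⟩, ?_, ?_⟩
  · -- second bullet : v₂ := F (I_h v₃) - l₃
    set v₂ : (Fin n → ℝ) → ℝ :=
      fun z => Fop A B T estar (Ih C Xh hXhne v₃) z - l₃ with hv₂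
    have hLip₂ : ∀ x ∈ X, ∀ y ∈ X, v₂ x - v₂ y ≤ funk C x y := by
      intro x hx y hy
      have := FopH2 _ (Mf + Mf) (IhBd v₃ Mf hbd₃) (IhLip v₃) x hx y hy
      simp only [hv₂]
      linarith
    have hIheq : Ih C Xh hXhne v₂ = Ih C Xh hXhne v₃ := by
      funext z
      rw [Ih_eq, Ih_eq]
      refine Finset.inf'_congr hXhne rfl ?_
      intro y hy
      have h1 := heig₃ y (hXhX y hy)
      simp only [hv₂]
      rw [h1]
      ring
    refine ⟨v₂, l₃, hLip₂, ?_, x₀, hx₀, v₂ x₀ - 2 * Mf, hdlike v₂ hLip₂ x₀ hx₀⟩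
    intro x hx
    rw [hIheq]
    simp only [hv₂]
    ring
  · -- third bullet : restriction to the grid
    have hLiph : ∀ x ∈ Xh, ∀ y ∈ Xh, v₃ x - v₃ y ≤ funk C x y :=
      fun x hx y hy => hLip₃ x (hXhX x hx) y (hXhX y hy)
    obtain ⟨y₀, hy₀⟩ := hXhne
    refine ⟨v₃, l₃, hLiph, fun x hx => heig₃ x (hXhX x hx), y₀, hy₀, v₃ y₀ - 2 * Mf, ?_⟩
    intro x hx
    exact hdlike v₃ hLip₃ y₀ (hXhX y₀ hy₀) x (hXhX x hx)
end

section
/- Under Assumption 1 and the small cone assumption, the operators F_h^+ = F I_h^+ R_h and F̂_h^+ = R_h F I_h^+ have the same additive eigenvalue: r(F̂_h^+) = r(F_h^+), where r(G) denotes the unique additive eigenvalue of G associated to a distance-like eigenvector, equal to lim_{k→∞} [G^k d(·,x₀)](x₀)/k. -/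
open Set Filter

section aux
variable {n : ℕ}

lemma dot_continuous (estar : Fin n → ℝ) :
    Continuous fun z : Fin n → ℝ => dotProduct z estar := by
  simp only [dotProduct]
  exact continuous_finset_sum _ fun i _ => (continuous_apply i).mul continuous_const

lemma zero_not_mem_interior {C : Set (Fin n → ℝ)}
    (hCcone : ∀ x ∈ C, ∀ r : ℝ, 0 ≤ r → r • x ∈ C)
    (hCpointed : ∀ x ∈ C, -x ∈ C → x = 0)
    {x0 : Fin n → ℝ} (hx0C : x0 ∈ C) (hx0 : x0 ≠ 0) :
    (0 : Fin n → ℝ) ∉ interior C := by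
  intro h0
  rw [mem_interior_iff_mem_nhds, Metric.mem_nhds_iff] at h0
  obtain ⟨ε, hε, hball⟩ := h0
  have hx0n : 0 < ‖x0‖ := norm_pos_iff.mpr hx0
  set s : ℝ := ε / (2 * ‖x0‖) with hs
  have hspos : 0 < s := by positivity
  have h1 : s • (-x0) ∈ C := by
    apply hball
    have hd : ‖s • (-x0)‖ = ε / 2 := by
      rw [norm_smul, norm_neg, Real.norm_eq_abs, abs_of_pos hspos, hs]
      field_simp
    simp only [Metric.mem_ball, dist_eq_norm, sub_zero, hd]
    linarith
  have h2 : -x0 ∈ C := by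
    have := hCcone _ h1 s⁻¹ (by positivity)
    rwa [smul_smul, inv_mul_cancel₀ hspos.ne', one_smul] at this
  exact hx0 (hCpointed x0 hx0C h2)

lemma dot_pos {C : Set (Fin n → ℝ)}
    (hCcone : ∀ x ∈ C, ∀ r : ℝ, 0 ≤ r → r • x ∈ C)
    (hCpointed : ∀ x ∈ C, -x ∈ C → x = 0)
    {estar : Fin n → ℝ} (hestar : estar ∈ interior (dualCone C))
    {x0 : Fin n → ℝ} (hx0C : x0 ∈ C) (hx0 : x0 ≠ 0)
    {z : Fin n → ℝ} (hz : z ∈ interior C) :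
    0 < dotProduct z estar := by
  have hzne : z ≠ 0 := by
    rintro rfl
    exact zero_not_mem_interior hCcone hCpointed hx0C hx0 hz
  have hzn : 0 < ‖z‖ := norm_pos_iff.mpr hzne
  rw [mem_interior_iff_mem_nhds, Metric.mem_nhds_iff] at hestar
  obtain ⟨ε, hε, hball⟩ := hestar
  set t : ℝ := ε / (2 * ‖z‖) with ht
  have htpos : 0 < t := by positivity
  have h1 : estar - t • z ∈ dualCone C := by
    apply hball
    have hd : ‖t • z‖ = ε / 2 := by
      rw [norm_smul, Real.norm_eq_abs, abs_of_pos htpos, ht]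
      field_simp
    simp only [Metric.mem_ball, dist_eq_norm, sub_sub_cancel_left, norm_neg, hd]
    linarith
  have h2 := h1 z (interior_subset hz)
  rw [dotProduct_sub, dotProduct_smul, smul_eq_mul] at h2
  have h3 : 0 < dotProduct z z := by
    rcases (dotProduct_self_eq_zero (v := z)).not.mpr hzne with h
    have h4 : 0 ≤ dotProduct z z := Finset.sum_nonneg fun i _ => mul_self_nonneg _
    exact lt_of_le_of_ne h4 (Ne.symm h)
  nlinarith

lemma funk_nonneg {C : Set (Fin n → ℝ)} {estar : Fin n → ℝ}
    (hdual : estar ∈ dualCone C) {z y : Fin n → ℝ}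
    (hz : dotProduct z estar = 1) (hy : dotProduct y estar = 1) :
    0 ≤ funk C z y := by
  unfold funk
  rcases eq_empty_or_nonempty {l : ℝ | 0 < l ∧ l • y - z ∈ C} with he | hne
  · rw [he, Real.sInf_empty, Real.log_zero]
  · have h1 : (1:ℝ) ≤ sInf {l : ℝ | 0 < l ∧ l • y - z ∈ C} := by
      apply le_csInf hne
      rintro l ⟨hl, hlC⟩
      have := hdual _ hlC
      rw [sub_dotProduct, smul_dotProduct, smul_eq_mul, hy, hz, mul_one] at this
      linarith
    exact Real.log_nonneg h1

lemma funk_le {C : Set (Fin n → ℝ)}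
    (hCcone : ∀ x ∈ C, ∀ r : ℝ, 0 ≤ r → r • x ∈ C)
    {y0 : Fin n → ℝ} (hy0 : y0 ∈ interior C) (M : ℝ) (hM : 0 ≤ M) :
    ∃ U : ℝ, ∀ z : Fin n → ℝ, ‖z‖ ≤ M → funk C z y0 ≤ U := by
  rw [mem_interior_iff_mem_nhds, Metric.mem_nhds_iff] at hy0
  obtain ⟨ε, hε, hball⟩ := hy0
  refine ⟨Real.log (M / ε + 1), fun z hz => ?_⟩
  set l0 : ℝ := M / ε + 1 with hl0def
  have hl01 : (1:ℝ) ≤ l0 := by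
    have h0 : 0 ≤ M / ε := by positivity
    rw [hl0def]; linarith
  have hl0pos : 0 < l0 := lt_of_lt_of_le one_pos hl01
  have hmem : l0 ∈ {l : ℝ | 0 < l ∧ l • y0 - z ∈ C} := by
    refine ⟨hl0pos, ?_⟩
    have h1 : y0 - l0⁻¹ • z ∈ C := by
      apply hball
      simp only [Metric.mem_ball, dist_eq_norm, sub_sub_cancel_left, norm_neg, norm_smul,
        Real.norm_eq_abs, abs_of_pos (inv_pos.mpr hl0pos)]
      rw [inv_mul_eq_div, div_lt_iff₀ hl0pos]
      have hme : ε * l0 = M + ε := by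
        rw [hl0def]; field_simp
      nlinarith
    have := hCcone _ h1 l0 hl0pos.le
    rwa [smul_sub, smul_inv_smul₀ hl0pos.ne'] at this
  have hbdd : BddBelow {l : ℝ | 0 < l ∧ l • y0 - z ∈ C} := ⟨0, fun l hl => hl.1.le⟩
  have h2 : sInf {l : ℝ | 0 < l ∧ l • y0 - z ∈ C} ≤ l0 := csInf_le hbdd hmem
  have h3 : 0 ≤ sInf {l : ℝ | 0 < l ∧ l • y0 - z ∈ C} :=
    le_csInf ⟨l0, hmem⟩ fun l hl => hl.1.le
  unfold funk
  rcases eq_or_lt_of_le h3 with h | h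
  · rw [← h, Real.log_zero]
    exact Real.log_nonneg hl01
  · exact Real.log_le_log h h2

lemma iInf_iSup_le_add {ι κ : Sort*} [Nonempty ι] [Nonempty κ] (f g : ι → κ → ℝ) (c : ℝ)
    (hfg : ∀ i j, f i j ≤ g i j + c)
    (hgb : ∀ i, BddAbove (range (g i)))
    (hfbelow : BddBelow (range fun i => ⨆ j, f i j)) :
    (⨅ i, ⨆ j, f i j) ≤ (⨅ i, ⨆ j, g i j) + c := by
  have hstep : ∀ i, (⨆ j, f i j) ≤ (⨆ j, g i j) + c := fun i =>
    ciSup_le fun j => (hfg i j).trans (add_le_add (le_ciSup (hgb i) j) le_rfl)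
  have h1 : ∀ i, (⨅ i, ⨆ j, f i j) ≤ (⨆ j, g i j) + c := fun i =>
    (ciInf_le hfbelow i).trans (hstep i)
  have h2 : (⨅ i, ⨆ j, f i j) - c ≤ ⨅ i, ⨆ j, g i j :=
    le_ciInf fun i => by linarith [h1 i]
  linarith

end aux
section key
variable {n : ℕ}

lemma key_le {C : Set (Fin n → ℝ)}
    (hCcone : ∀ x ∈ C, ∀ r : ℝ, 0 ≤ r → r • x ∈ C)
    (hCpointed : ∀ x ∈ C, -x ∈ C → x = 0)
    {estar : Fin n → ℝ} (hestar : estar ∈ interior (dualCone C))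
    {E : Type*} {A B : Set E} (hAne : A.Nonempty) (hBne : B.Nonempty)
    {T : E → E → (Fin n → ℝ) → (Fin n → ℝ)}
    (hTmaps : ∀ a ∈ A, ∀ b ∈ B, ∀ x ∈ interior C, T a b x ∈ interior C)
    (hcomp : ∀ Kc : Set (Fin n → ℝ), Kc ⊆ interior C → IsCompact Kc →
      IsCompact {z | ∃ a ∈ A, ∃ b ∈ B, ∃ x ∈ Kc, z = T a b x})
    {K : Set (Fin n → ℝ)} (hKC : K ⊆ C)
    (hXsub : crossSec K estar ⊆ interior C)
    {Xh : Finset (Fin n → ℝ)} (hXhne : Xh.Nonempty)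
    (hXhsub : ↑Xh ⊆ crossSec K estar)
    (v : (Fin n → ℝ) → ℝ) (l : ℝ) (w : (Fin n → ℝ) → ℝ) (m : ℝ)
    (heigv : ∀ x ∈ Xh, Fop A B T estar (Ih C Xh hXhne v) x = l + v x)
    (heigw : ∀ x ∈ Xh, Fop A B T estar (Ih C Xh hXhne w) x = m + w x) :
    l ≤ m := by
  haveI : Nonempty ↥A := hAne.to_subtype
  haveI : Nonempty ↥B := hBne.to_subtype
  -- base point y0
  obtain ⟨y0, hy0⟩ := hXhne.exists_mem
  have hy0X : y0 ∈ crossSec K estar := hXhsub (Finset.mem_coe.mpr hy0)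
  have hy0C : y0 ∈ C := hKC hy0X.1
  have hy0dot : dotProduct y0 estar = 1 := hy0X.2
  have hy0ne : y0 ≠ 0 := by
    rintro rfl
    simp [zero_dotProduct] at hy0dot
  have hy0int : y0 ∈ interior C := hXsub hy0X
  -- maximizer of v - w
  obtain ⟨xs, hxs, hmax⟩ := Finset.exists_max_image Xh (fun y => v y - w y) ⟨y0, hy0⟩
  set c : ℝ := v xs - w xs with hc
  have hxsX : xs ∈ crossSec K estar := hXhsub (Finset.mem_coe.mpr hxs)
  have hxsInt : xs ∈ interior C := hXsub hxsX
  -- boundedness of the inner terms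
  have hbound : ∀ u : (Fin n → ℝ) → ℝ, ∃ L U : ℝ, ∀ (a : A) (b : B),
      L ≤ Real.log (dotProduct (T a b xs) estar) +
        Ih C Xh hXhne u ((dotProduct (T a b xs) estar)⁻¹ • T a b xs) ∧
      Real.log (dotProduct (T a b xs) estar) +
        Ih C Xh hXhne u ((dotProduct (T a b xs) estar)⁻¹ • T a b xs) ≤ U := by
    intro u
    set Z : Set (Fin n → ℝ) :=
      {z | ∃ a ∈ A, ∃ b ∈ B, ∃ x ∈ ({xs} : Set (Fin n → ℝ)), z = T a b x} with hZ
    have hZc : IsCompact Z :=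
      hcomp _ (Set.singleton_subset_iff.mpr hxsInt) isCompact_singleton
    have hZsub : Z ⊆ interior C := by
      rintro z ⟨a, ha, b, hb, x', hx', rfl⟩
      rw [Set.mem_singleton_iff] at hx'
      subst hx'
      exact hTmaps a ha b hb _ hxsInt
    have hZne : Z.Nonempty :=
      ⟨_, hAne.choose, hAne.choose_spec, hBne.choose, hBne.choose_spec, xs, rfl, rfl⟩
    obtain ⟨z1, hz1, hz1min⟩ :=
      hZc.exists_isMinOn hZne ((dot_continuous estar).continuousOn)
    obtain ⟨z2, hz2, hz2max⟩ :=
      hZc.exists_isMaxOn hZne ((dot_continuous estar).continuousOn)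
    obtain ⟨z3, hz3, hz3max⟩ := hZc.exists_isMaxOn hZne continuous_norm.continuousOn
    have hδ0 : 0 < dotProduct z1 estar :=
      dot_pos hCcone hCpointed hestar hy0C hy0ne (hZsub hz1)
    set M : ℝ := (dotProduct z1 estar)⁻¹ * ‖z3‖ with hMdef
    have hM : 0 ≤ M := by positivity
    obtain ⟨U0, hU0⟩ := funk_le hCcone hy0int M hM
    refine ⟨Real.log (dotProduct z1 estar) + Xh.inf' hXhne u,
      Real.log (dotProduct z2 estar) + (u y0 + U0), fun a b => ?_⟩
    have hzZ : T a b xs ∈ Z := ⟨a, a.2, b, b.2, xs, rfl, rfl⟩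
    set z : Fin n → ℝ := T a b xs with hzdef
    have hd : 0 < dotProduct z estar :=
      dot_pos hCcone hCpointed hestar hy0C hy0ne (hZsub hzZ)
    set d : ℝ := dotProduct z estar with hddef
    set z' : Fin n → ℝ := d⁻¹ • z with hz'def
    have hz'dot : dotProduct z' estar = 1 := by
      rw [hz'def, smul_dotProduct, smul_eq_mul, ← hddef, inv_mul_cancel₀ hd.ne']
    have hdmin : dotProduct z1 estar ≤ d := isMinOn_iff.mp hz1min z hzZ
    have hdmax : d ≤ dotProduct z2 estar := isMaxOn_iff.mp hz2max z hzZ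
    have hz'norm : ‖z'‖ ≤ M := by
      rw [hz'def, norm_smul, Real.norm_eq_abs, abs_of_pos (inv_pos.mpr hd), hMdef]
      have h1 : d⁻¹ ≤ (dotProduct z1 estar)⁻¹ := by
        apply inv_anti₀ hδ0 hdmin
      have h2 : ‖z‖ ≤ ‖z3‖ := isMaxOn_iff.mp hz3max z hzZ
      exact mul_le_mul h1 h2 (norm_nonneg _) (by positivity)
    have hIhlow : Xh.inf' hXhne u ≤ Ih C Xh hXhne u z' := by
      apply Finset.le_inf'
      intro y hy
      have h1 : 0 ≤ funk C z' y :=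
        funk_nonneg (interior_subset hestar) hz'dot (hXhsub (Finset.mem_coe.mpr hy)).2
      have h2 := Finset.inf'_le u hy
      linarith
    have hIhhigh : Ih C Xh hXhne u z' ≤ u y0 + U0 := by
      refine le_trans (Finset.inf'_le _ hy0) ?_
      exact add_le_add le_rfl (hU0 z' hz'norm)
    constructor
    · exact add_le_add (Real.log_le_log hδ0 hdmin) hIhlow
    · exact add_le_add (Real.log_le_log hd hdmax) hIhhigh
  -- the shift inequality for Ih
  have hIh : ∀ t : Fin n → ℝ, Ih C Xh hXhne v t ≤ Ih C Xh hXhne w t + c := by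
    intro t
    obtain ⟨y, hy, hyeq⟩ := Finset.exists_mem_eq_inf' hXhne (fun y => w y + funk C t y)
    unfold Ih
    rw [hyeq]
    have h1 : Xh.inf' hXhne (fun y => v y + funk C t y) ≤ v y + funk C t y :=
      Finset.inf'_le _ hy
    have h2 : v y - w y ≤ c := hmax y hy
    linarith
  -- assemble
  obtain ⟨Lv, Uv, hbv⟩ := hbound v
  obtain ⟨Lw, Uw, hbw⟩ := hbound w
  set f : ↥A → ↥B → ℝ := fun a b =>
    Real.log (dotProduct (T a b xs) estar) +
      Ih C Xh hXhne v ((dotProduct (T a b xs) estar)⁻¹ • T a b xs) with hf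
  set g : ↥A → ↥B → ℝ := fun a b =>
    Real.log (dotProduct (T a b xs) estar) +
      Ih C Xh hXhne w ((dotProduct (T a b xs) estar)⁻¹ • T a b xs) with hg
  have hfg : ∀ a b, f a b ≤ g a b + c := by
    intro a b
    have := hIh ((dotProduct (T a b xs) estar)⁻¹ • T a b xs)
    simp only [hf, hg]
    linarith
  have hgb : ∀ a, BddAbove (Set.range (g a)) := by
    intro a
    refine ⟨Uw, ?_⟩
    rintro _ ⟨b, rfl⟩
    exact (hbw a b).2
  have hfbA : ∀ a, BddAbove (Set.range (f a)) := by
    intro a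
    refine ⟨Uv, ?_⟩
    rintro _ ⟨b, rfl⟩
    exact (hbv a b).2
  have hfbelow : BddBelow (Set.range fun a => ⨆ b, f a b) := by
    refine ⟨Lv, ?_⟩
    rintro _ ⟨a, rfl⟩
    obtain b0 := Classical.arbitrary ↥B
    exact (hbv a b0).1.trans (le_ciSup (hfbA a) b0)
  have hmain : (⨅ a, ⨆ b, f a b) ≤ (⨅ a, ⨆ b, g a b) + c :=
    iInf_iSup_le_add f g c hfg hgb hfbelow
  have e1 : Fop A B T estar (Ih C Xh hXhne v) xs = ⨅ a, ⨆ b, f a b := rfl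
  have e2 : Fop A B T estar (Ih C Xh hXhne w) xs = ⨅ a, ⨆ b, g a b := rfl
  have hv := heigv xs hxs
  have hw := heigw xs hxs
  rw [e1] at hv
  rw [e2] at hw
  rw [hv, hw] at hmain
  simp only [hc] at hmain
  linarith

end key

/-- the operators `F_h^+ = F I_h^+ R_h` and `F̂_h^+ = R_h F I_h^+`
have the same additive eigenvalue associated to distance-like eigenvectors. -/
theorem stmt_15
    {n : ℕ} (C : Set (Fin n → ℝ))
    (hCclosed : IsClosed C) (hCconv : Convex ℝ C)
    (hCcone : ∀ x ∈ C, ∀ r : ℝ, 0 ≤ r → r • x ∈ C)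
    (hCpointed : ∀ x ∈ C, -x ∈ C → x = 0)
    (estar : Fin n → ℝ) (hestar : estar ∈ interior (dualCone C))
    {E : Type*} [MetricSpace E]
    (A B : Set E) (hAc : IsCompact A) (hAne : A.Nonempty)
    (hBc : IsCompact B) (hBne : B.Nonempty)
    (T : E → E → (Fin n → ℝ) → (Fin n → ℝ))
    (hTmaps : ∀ a ∈ A, ∀ b ∈ B, ∀ x ∈ interior C, T a b x ∈ interior C)
    (hTnexp : ∀ a ∈ A, ∀ b ∈ B, ∀ x ∈ interior C, ∀ y ∈ interior C,
      funk C (T a b x) (T a b y) ≤ funk C x y)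
    (hconta : ∀ x ∈ interior C, ∀ b ∈ B, ContinuousOn (fun a => T a b x) A)
    (hcontb : ∀ x ∈ interior C, ∀ a ∈ A, ContinuousOn (fun b => T a b x) B)
    (hcomp : ∀ Kc : Set (Fin n → ℝ), Kc ⊆ interior C → IsCompact Kc →
      IsCompact {z | ∃ a ∈ A, ∃ b ∈ B, ∃ x ∈ Kc, z = T a b x})
    (K : Set (Fin n → ℝ)) (hKclosed : IsClosed K)
    (hKcone : ∀ x ∈ K, ∀ r : ℝ, 0 ≤ r → r • x ∈ K) (hKC : K ⊆ C)
    (hTK : ∀ a ∈ A, ∀ b ∈ B, ∀ x ∈ K, T a b x ∈ K)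
    (hXsub : crossSec K estar ⊆ interior C)
    (hXne : (crossSec K estar).Nonempty)
    (h : ℝ) (hh : 0 < h)
    (Xh : Finset (Fin n → ℝ)) (hXhne : Xh.Nonempty)
    (hXhsub : ↑Xh ⊆ crossSec K estar)
    (hcover : ∀ x ∈ crossSec K estar, ∃ y ∈ Xh, funk C x y + funk C y x < h)
    (v : (Fin n → ℝ) → ℝ) (l : ℝ)
    (hvLip : ∀ x ∈ crossSec K estar, ∀ y ∈ crossSec K estar, v x - v y ≤ funk C x y)
    (heigv : ∀ x ∈ crossSec K estar, Fop A B T estar (Ih C Xh hXhne v) x = l + v x)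
    (hvdl : ∃ x₀ ∈ crossSec K estar, ∃ α : ℝ, ∀ x ∈ crossSec K estar,
      α + funk C x x₀ ≤ v x)
    (w : (Fin n → ℝ) → ℝ) (m : ℝ)
    (hwLip : ∀ x ∈ Xh, ∀ y ∈ Xh, w x - w y ≤ funk C x y)
    (heigw : ∀ x ∈ Xh, Fop A B T estar (Ih C Xh hXhne w) x = m + w x)
    (hwdl : ∃ x₀ ∈ Xh, ∃ α : ℝ, ∀ x ∈ Xh, α + funk C x x₀ ≤ w x) :
    l = m := by
  have heigv' : ∀ x ∈ Xh, Fop A B T estar (Ih C Xh hXhne v) x = l + v x :=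
    fun x hx => heigv x (hXhsub (Finset.mem_coe.mpr hx))
  exact le_antisymm
    (key_le hCcone hCpointed hestar hAne hBne hTmaps hcomp hKC hXsub hXhne hXhsub
      v l w m heigv' heigw)
    (key_le hCcone hCpointed hestar hAne hBne hTmaps hcomp hKC hXsub hXhne hXhsub
      w m v l heigw heigv')
end

section
/- Set M⁺ = max over (a,b) ∈ 𝒜×ℬ and x,y ∈ X of Funk(T_{ab}(x), y), and M⁻ = the corresponding minimum. If (w, λ) ∈ Lip₁(X_h) × ℝ is an additive eigenpair of F̂_h^+ (F̂_h^+ w = λ + w), then M⁻ ≤ λ ≤ M⁺ and ‖w‖_H ≤ M⁺ − λ ≤ M⁺ − M⁻, where ‖w‖_H = max_j w(x_j) − min_j w(x_j) is the Hilbert seminorm. -/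
open Set Filter

/-- The Hilbert seminorm on functions on the grid:
`‖v‖_H = max_{x ∈ X_h} v(x) - min_{x ∈ X_h} v(x)`. -/
noncomputable def hsemi {n : ℕ} (Xh : Finset (Fin n → ℝ)) (hne : Xh.Nonempty)
    (f : (Fin n → ℝ) → ℝ) : ℝ :=
  Xh.sup' hne f - Xh.inf' hne f

/-- The set of values `Funk(T_{ab}(x), y)` for `a ∈ 𝒜`, `b ∈ ℬ`, `x, y ∈ X`;
`M⁺` and `M⁻` are its supremum and infimum. -/
def MSet {n : ℕ} {E : Type*} (C K : Set (Fin n → ℝ)) (estar : Fin n → ℝ)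
    (A B : Set E) (T : E → E → (Fin n → ℝ) → (Fin n → ℝ)) : Set ℝ :=
  {r | ∃ a ∈ A, ∃ b ∈ B, ∃ x ∈ crossSec K estar, ∃ y ∈ crossSec K estar,
    r = funk C (T a b x) y}

open Pointwise in
private lemma stmt18_inf'_add_const {α : Type*} (s : Finset α) (hs : s.Nonempty)
    (f : α → ℝ) (k : ℝ) :
    s.inf' hs (fun y => f y + k) = s.inf' hs f + k := by
  apply le_antisymm
  · obtain ⟨y0, hy0, hEq⟩ := s.exists_mem_eq_inf' hs f
    calc s.inf' hs (fun y => f y + k) ≤ f y0 + k := Finset.inf'_le _ hy0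
    _ = _ := by rw [hEq]
  · apply Finset.le_inf'
    intro y hy
    exact add_le_add_left (Finset.inf'_le _ hy) k

open Pointwise in
private lemma stmt18_funk_smul_inv {n : ℕ} {C : Set (Fin n → ℝ)}
    (hCcone : ∀ x ∈ C, ∀ r : ℝ, 0 ≤ r → r • x ∈ C)
    {z y : Fin n → ℝ} {c : ℝ} (hc : 0 < c)
    (hpos : 0 < sInf {l : ℝ | 0 < l ∧ l • y - z ∈ C}) :
    funk C (c⁻¹ • z) y = funk C z y - Real.log c := by
  have hset : {l : ℝ | 0 < l ∧ l • y - c⁻¹ • z ∈ C}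
      = c⁻¹ • {l : ℝ | 0 < l ∧ l • y - z ∈ C} := by
    ext l
    rw [Set.mem_smul_set_iff_inv_smul_mem₀ (inv_ne_zero hc.ne')]
    simp only [inv_inv, smul_eq_mul, Set.mem_setOf_eq]
    constructor
    · rintro ⟨hl, hmem⟩
      refine ⟨by positivity, ?_⟩
      have h2 : c • (l • y - c⁻¹ • z) = (c * l) • y - z := by
        rw [smul_sub, smul_smul, smul_smul, mul_inv_cancel₀ hc.ne', one_smul]
      rw [← h2]
      exact hCcone _ hmem c hc.le
    · rintro ⟨hl, hmem⟩
      have hl' : 0 < l := by nlinarith [hl, hc]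
      refine ⟨hl', ?_⟩
      have h2 : c⁻¹ • ((c * l) • y - z) = l • y - c⁻¹ • z := by
        rw [smul_sub, smul_smul, inv_mul_cancel_left₀ hc.ne']
      rw [← h2]
      exact hCcone _ hmem c⁻¹ (by positivity)
  unfold funk
  rw [hset, Real.sInf_smul_of_nonneg (by positivity), smul_eq_mul,
    Real.log_mul (by positivity) hpos.ne', Real.log_inv]
  ring

/-- bounds on the eigenvalue and the Hilbert seminorm of an eigenvector
of the discretized Shapley operator `F̂_h^+`, in terms of `M⁺` and `M⁻`. -/
theorem stmt_18
    {n : ℕ} (C : Set (Fin n → ℝ))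
    (hCclosed : IsClosed C) (hCconv : Convex ℝ C)
    (hCcone : ∀ x ∈ C, ∀ r : ℝ, 0 ≤ r → r • x ∈ C)
    (hCpointed : ∀ x ∈ C, -x ∈ C → x = 0)
    (estar : Fin n → ℝ) (hestar : estar ∈ interior (dualCone C))
    {E : Type*} [MetricSpace E]
    (A B : Set E) (hAc : IsCompact A) (hAne : A.Nonempty)
    (hBc : IsCompact B) (hBne : B.Nonempty)
    (T : E → E → (Fin n → ℝ) → (Fin n → ℝ))
    (hTmaps : ∀ a ∈ A, ∀ b ∈ B, ∀ x ∈ interior C, T a b x ∈ interior C)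
    (hTnexp : ∀ a ∈ A, ∀ b ∈ B, ∀ x ∈ interior C, ∀ y ∈ interior C,
      funk C (T a b x) (T a b y) ≤ funk C x y)
    (hconta : ∀ x ∈ interior C, ∀ b ∈ B, ContinuousOn (fun a => T a b x) A)
    (hcontb : ∀ x ∈ interior C, ∀ a ∈ A, ContinuousOn (fun b => T a b x) B)
    (hcomp : ∀ Kc : Set (Fin n → ℝ), Kc ⊆ interior C → IsCompact Kc →
      IsCompact {z | ∃ a ∈ A, ∃ b ∈ B, ∃ x ∈ Kc, z = T a b x})
    (K : Set (Fin n → ℝ)) (hKclosed : IsClosed K)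
    (hKcone : ∀ x ∈ K, ∀ r : ℝ, 0 ≤ r → r • x ∈ K) (hKC : K ⊆ C)
    (hTK : ∀ a ∈ A, ∀ b ∈ B, ∀ x ∈ K, T a b x ∈ K)
    (hXsub : crossSec K estar ⊆ interior C)
    (hXne : (crossSec K estar).Nonempty)
    (h : ℝ) (hh : 0 < h)
    (Xh : Finset (Fin n → ℝ)) (hXhne : Xh.Nonempty)
    (hXhsub : ↑Xh ⊆ crossSec K estar)
    (hcover : ∀ x ∈ crossSec K estar, ∃ y ∈ Xh, funk C x y + funk C y x < h)
    (w : (Fin n → ℝ) → ℝ) (l : ℝ)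
    (hwLip : ∀ x ∈ Xh, ∀ y ∈ Xh, w x - w y ≤ funk C x y)
    (heig : ∀ x ∈ Xh, Fop A B T estar (Ih C Xh hXhne w) x = l + w x) :
    sInf (MSet C K estar A B T) ≤ l ∧ l ≤ sSup (MSet C K estar A B T) ∧
    hsemi Xh hXhne w ≤ sSup (MSet C K estar A B T) - l ∧
    sSup (MSet C K estar A B T) - l ≤
      sSup (MSet C K estar A B T) - sInf (MSet C K estar A B T) := by
  classical
  obtain ⟨x0, hx0K, hx0dp⟩ := hXne
  have hx0C : x0 ∈ C := hKC hx0K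
  have hx0ne : x0 ≠ 0 := by
    rintro rfl
    rw [zero_dotProduct] at hx0dp
    norm_num at hx0dp
  have hdual : ∀ x ∈ C, 0 ≤ dotProduct x estar := interior_subset hestar
  obtain ⟨ε, hε, hball⟩ := Metric.isOpen_iff.mp isOpen_interior estar hestar
  -- the dot product with `e*` is positive on `C \ {0}`
  have hposC : ∀ z ∈ C, z ≠ 0 → 0 < dotProduct z estar := by
    intro z hz hz0
    rcases lt_or_eq_of_le (hdual z hz) with hlt | heq
    · exact hlt
    · exfalso
      set t : ℝ := ε / (2 * (‖z‖ + 1)) with ht_def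
      have hnz : (0:ℝ) < ‖z‖ + 1 := by positivity
      have ht : 0 < t := by positivity
      have hmem : estar - t • z ∈ dualCone C := by
        apply interior_subset
        apply hball
        rw [Metric.mem_ball, dist_eq_norm, sub_sub_cancel_left, norm_neg, norm_smul,
          Real.norm_eq_abs, abs_of_pos ht]
        have h1 : t * ‖z‖ ≤ t * (‖z‖ + 1) := by nlinarith [norm_nonneg z]
        have h2 : t * (‖z‖ + 1) = ε / 2 := by
          rw [ht_def]; field_simp
        linarith
      have hzz : 0 < dotProduct z z := by
        refine lt_of_le_of_ne ?_ (fun h3 => hz0 (dotProduct_self_eq_zero.mp h3.symm))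
        exact Finset.sum_nonneg fun i _ => mul_self_nonneg _
      have h4 := hmem z hz
      rw [dotProduct_sub, dotProduct_smul, ← heq, smul_eq_mul] at h4
      nlinarith
  -- `0` is not in the interior of `C`
  have h0notint : (0 : Fin n → ℝ) ∉ interior C := by
    intro h0
    obtain ⟨r, hr, hball0⟩ := Metric.isOpen_iff.mp isOpen_interior 0 h0
    have hx0n : (0:ℝ) < ‖x0‖ := norm_pos_iff.mpr hx0ne
    set u : Fin n → ℝ := (r / (2 * ‖x0‖)) • x0 with hu
    have hcoef : (0:ℝ) < r / (2 * ‖x0‖) := by positivity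
    have huC : u ∈ C := hCcone x0 hx0C _ hcoef.le
    have hnegu : -u ∈ C := by
      apply interior_subset; apply hball0
      rw [Metric.mem_ball, dist_zero_right, norm_neg, norm_smul, Real.norm_eq_abs,
        abs_of_pos hcoef, div_mul_eq_mul_div, div_lt_iff₀ (by positivity)]
      nlinarith
    have h5 := hCpointed u huC hnegu
    exact (smul_ne_zero hcoef.ne' hx0ne) h5
  have hdpcont : Continuous fun x : Fin n → ℝ => dotProduct x estar := by
    have h6 : Continuous fun x : Fin n → ℝ => ∑ i, x i * estar i :=
      continuous_finset_sum _ fun i _ => (continuous_apply i).mul continuous_const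
    simpa [dotProduct] using h6
  -- the cross-section `X` is compact
  have hXcomp : IsCompact (crossSec K estar) := by
    set S : Set (Fin n → ℝ) := {x ∈ C | ‖x‖ = 1} with hS
    have hScomp : IsCompact S := by
      apply Metric.isCompact_of_isClosed_isBounded
      · exact hCclosed.inter (isClosed_eq continuous_norm continuous_const)
      · apply Bornology.IsBounded.subset
          (Metric.isBounded_closedBall (x := (0:Fin n → ℝ)) (r := 1))
        rintro x ⟨-, hx⟩
        simp [Metric.mem_closedBall, dist_zero_right, hx]
    have hx0n : (0:ℝ) < ‖x0‖ := norm_pos_iff.mpr hx0ne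
    have hSne : S.Nonempty := by
      refine ⟨‖x0‖⁻¹ • x0, hCcone x0 hx0C _ (by positivity), ?_⟩
      rw [norm_smul, Real.norm_eq_abs, abs_of_pos (inv_pos.mpr hx0n),
        inv_mul_cancel₀ hx0n.ne']
    obtain ⟨xm, hxm, hmin⟩ := hScomp.exists_isMinOn hSne (hdpcont.continuousOn)
    have hxmne : xm ≠ 0 := by
      intro h7; rw [h7] at hxm; simp [hS] at hxm
    have hm : 0 < dotProduct xm estar := hposC xm hxm.1 hxmne
    have hlow : ∀ x ∈ C, dotProduct xm estar * ‖x‖ ≤ dotProduct x estar := by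
      intro x hx
      rcases eq_or_ne x 0 with rfl | hxne
      · simp
      · have hxn : (0:ℝ) < ‖x‖ := norm_pos_iff.mpr hxne
        have hmemS : ‖x‖⁻¹ • x ∈ S := by
          refine ⟨hCcone x hx _ (by positivity), ?_⟩
          rw [norm_smul, Real.norm_eq_abs, abs_of_pos (inv_pos.mpr hxn),
            inv_mul_cancel₀ hxn.ne']
        have hmin2 := isMinOn_iff.mp hmin _ hmemS
        rw [smul_dotProduct, smul_eq_mul] at hmin2
        calc dotProduct xm estar * ‖x‖
            ≤ ‖x‖⁻¹ * dotProduct x estar * ‖x‖ := by nlinarith [hmin2]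
          _ = dotProduct x estar := by field_simp
    apply Metric.isCompact_of_isClosed_isBounded
    · exact hKclosed.inter (isClosed_eq hdpcont continuous_const)
    · rw [isBounded_iff_forall_norm_le]
      refine ⟨(dotProduct xm estar)⁻¹, ?_⟩
      rintro x ⟨hxK, hxdp⟩
      have h1 := hlow x (hKC hxK)
      rw [hxdp] at h1
      nlinarith [mul_inv_cancel₀ hm.ne', hm, h1, norm_nonneg x]
  -- the image set `Z`
  set Z : Set (Fin n → ℝ) := {z | ∃ a ∈ A, ∃ b ∈ B, ∃ x ∈ crossSec K estar, z = T a b x}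
    with hZdef
  have hZc : IsCompact Z := hcomp _ hXsub hXcomp
  have hZK : Z ⊆ K := by
    rintro z ⟨a, ha, b, hb, x, hx, rfl⟩
    exact hTK a ha b hb x hx.1
  have hZint : Z ⊆ interior C := by
    rintro z ⟨a, ha, b, hb, x, hx, rfl⟩
    exact hTmaps a ha b hb x (hXsub hx)
  obtain ⟨a0, ha0⟩ := hAne
  obtain ⟨b0, hb0⟩ := hBne
  have hZne : Z.Nonempty := ⟨T a0 b0 x0, a0, ha0, b0, hb0, x0, ⟨hx0K, hx0dp⟩, rfl⟩
  have hdpZ : ∀ z ∈ Z, 0 < dotProduct z estar := by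
    intro z hz
    refine hposC z (hKC (hZK hz)) ?_
    rintro rfl
    exact h0notint (hZint hz)
  -- the positive lower bound `m1`
  obtain ⟨z1, hz1, hz1min⟩ := hZc.exists_isMinOn hZne (hdpcont.continuousOn)
  set m1 : ℝ := dotProduct z1 estar with hm1def
  have hm1 : 0 < m1 := hdpZ z1 hz1
  have hm1le : ∀ z ∈ Z, m1 ≤ dotProduct z estar := fun z hz => isMinOn_iff.mp hz1min z hz
  -- the uniform upper bound `L`
  obtain ⟨δ, hδ, hthick⟩ := hXcomp.exists_thickening_subset_open isOpen_interior hXsub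
  obtain ⟨R, hR⟩ := isBounded_iff_forall_norm_le.mp hZc.isBounded
  set R' : ℝ := max R 0 + 1 with hR'def
  have hR' : 0 < R' := by positivity
  set c0 : ℝ := δ / (2 * R') with hc0def
  have hc0 : 0 < c0 := by positivity
  set L : ℝ := c0⁻¹ with hLdef
  have hL : 0 < L := by positivity
  have hLmem : ∀ z ∈ Z, ∀ y ∈ crossSec K estar,
      L ∈ {l : ℝ | 0 < l ∧ l • y - z ∈ C} := by
    intro z hz y hy
    refine ⟨hL, ?_⟩
    have hmem : y - c0 • z ∈ Metric.thickening δ (crossSec K estar) := by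
      rw [Metric.mem_thickening_iff]
      refine ⟨y, hy, ?_⟩
      rw [dist_eq_norm, sub_sub_cancel_left, norm_neg, norm_smul, Real.norm_eq_abs,
        abs_of_pos hc0]
      have h8 : ‖z‖ ≤ R := hR z hz
      have h9 : c0 * ‖z‖ ≤ c0 * R' - c0 := by
        have : ‖z‖ ≤ R' - 1 := by
          rw [hR'def]; have := le_max_left R 0; linarith
        nlinarith
      have h10 : c0 * R' = δ / 2 := by
        rw [hc0def]; field_simp
      nlinarith [h9, h10, hc0, hδ]
    have hmemC : y - c0 • z ∈ C := interior_subset (hthick hmem)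
    have h11 : L • (y - c0 • z) = L • y - z := by
      rw [smul_sub, smul_smul, hLdef, inv_mul_cancel₀ hc0.ne', one_smul]
    rw [← h11]
    exact hCcone _ hmemC L hL.le
  -- bounds for the Funk values
  have hSlb : ∀ z ∈ Z, ∀ y ∈ crossSec K estar, ∀ l ∈ {l : ℝ | 0 < l ∧ l • y - z ∈ C},
      dotProduct z estar ≤ l := by
    rintro z hz y hy l ⟨hl, hlC⟩
    have h12 := hdual _ hlC
    rw [sub_dotProduct, smul_dotProduct, hy.2, smul_eq_mul, mul_one] at h12
    linarith
  have hsInflb : ∀ z ∈ Z, ∀ y ∈ crossSec K estar,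
      m1 ≤ sInf {l : ℝ | 0 < l ∧ l • y - z ∈ C} := by
    intro z hz y hy
    refine le_csInf ⟨L, hLmem z hz y hy⟩ fun l hl => ?_
    exact le_trans (hm1le z hz) (hSlb z hz y hy l hl)
  have hsInfub : ∀ z ∈ Z, ∀ y ∈ crossSec K estar,
      sInf {l : ℝ | 0 < l ∧ l • y - z ∈ C} ≤ L := by
    intro z hz y hy
    refine csInf_le ⟨m1, fun l hl => le_trans (hm1le z hz) (hSlb z hz y hy l hl)⟩
      (hLmem z hz y hy)
  have hfunklb : ∀ z ∈ Z, ∀ y ∈ crossSec K estar, Real.log m1 ≤ funk C z y := by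
    intro z hz y hy
    exact Real.log_le_log hm1 (hsInflb z hz y hy)
  have hfunkub : ∀ z ∈ Z, ∀ y ∈ crossSec K estar, funk C z y ≤ Real.log L := by
    intro z hz y hy
    exact Real.log_le_log (lt_of_lt_of_le hm1 (hsInflb z hz y hy)) (hsInfub z hz y hy)
  -- boundedness of `MSet`
  have hMbddAbove : BddAbove (MSet C K estar A B T) := by
    refine ⟨Real.log L, ?_⟩
    rintro r ⟨a, ha, b, hb, x, hx, y, hy, rfl⟩
    exact hfunkub _ ⟨a, ha, b, hb, x, hx, rfl⟩ y hy
  have hMbddBelow : BddBelow (MSet C K estar A B T) := by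
    refine ⟨Real.log m1, ?_⟩
    rintro r ⟨a, ha, b, hb, x, hx, y, hy, rfl⟩
    exact hfunklb _ ⟨a, ha, b, hb, x, hx, rfl⟩ y hy
  set Minf : ℝ := sInf (MSet C K estar A B T) with hMinfdef
  set Msup : ℝ := sSup (MSet C K estar A B T) with hMsupdef
  set mw : ℝ := Xh.inf' hXhne w with hmwdef
  set Mw : ℝ := Xh.sup' hXhne w with hMwdef
  have hXhX : ∀ x ∈ Xh, x ∈ crossSec K estar := fun x hx => hXhsub hx
  -- pointwise description of the inner expression
  have hkey : ∀ x ∈ Xh, ∀ a ∈ A, ∀ b ∈ B,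
      Real.log (dotProduct (T a b x) estar) +
        Ih C Xh hXhne w ((dotProduct (T a b x) estar)⁻¹ • T a b x)
      = Xh.inf' hXhne (fun y => w y + funk C (T a b x) y) := by
    intro x hx a ha b hb
    have hzZ : T a b x ∈ Z := ⟨a, ha, b, hb, x, hXhX x hx, rfl⟩
    have hc : 0 < dotProduct (T a b x) estar := hdpZ _ hzZ
    have hIh : Ih C Xh hXhne w ((dotProduct (T a b x) estar)⁻¹ • T a b x)
        = Xh.inf' hXhne (fun y => w y + funk C (T a b x) y)
          - Real.log (dotProduct (T a b x) estar) := by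
      unfold Ih
      have hcongr : ∀ y ∈ Xh,
          w y + funk C ((dotProduct (T a b x) estar)⁻¹ • T a b x) y
          = (fun y => (w y + funk C (T a b x) y) +
              (- Real.log (dotProduct (T a b x) estar))) y := by
        intro y hy
        have hpos : 0 < sInf {l : ℝ | 0 < l ∧ l • y - T a b x ∈ C} :=
          lt_of_lt_of_le hm1 (hsInflb _ hzZ y (hXhX y hy))
        rw [stmt18_funk_smul_inv hCcone hc hpos]
        ring
      rw [Finset.inf'_congr hXhne rfl hcongr, stmt18_inf'_add_const]
      ring
    rw [hIh]; ring
  -- bounds on the inner expression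
  have hinner_lb : ∀ x ∈ Xh, ∀ a ∈ A, ∀ b ∈ B,
      mw + Minf ≤ Xh.inf' hXhne (fun y => w y + funk C (T a b x) y) := by
    intro x hx a ha b hb
    apply Finset.le_inf'
    intro y hy
    have hmem : funk C (T a b x) y ∈ MSet C K estar A B T :=
      ⟨a, ha, b, hb, x, hXhX x hx, y, hXhX y hy, rfl⟩
    have h13 : Minf ≤ funk C (T a b x) y := csInf_le hMbddBelow hmem
    have h14 : mw ≤ w y := Finset.inf'_le _ hy
    linarith
  have hinner_ub : ∀ x ∈ Xh, ∀ a ∈ A, ∀ b ∈ B,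
      Xh.inf' hXhne (fun y => w y + funk C (T a b x) y) ≤ mw + Msup := by
    intro x hx a ha b hb
    obtain ⟨ym, hym, hymEq⟩ := Xh.exists_mem_eq_inf' hXhne w
    have hmem : funk C (T a b x) ym ∈ MSet C K estar A B T :=
      ⟨a, ha, b, hb, x, hXhX x hx, ym, hXhX ym hym, rfl⟩
    have h15 : funk C (T a b x) ym ≤ Msup := le_csSup hMbddAbove hmem
    calc Xh.inf' hXhne (fun y => w y + funk C (T a b x) y)
        ≤ w ym + funk C (T a b x) ym := Finset.inf'_le _ hym
      _ ≤ mw + Msup := by rw [hmwdef, hymEq]; linarith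
  -- bounds on the value of the operator
  haveI : Nonempty ↥A := ⟨⟨a0, ha0⟩⟩
  haveI : Nonempty ↥B := ⟨⟨b0, hb0⟩⟩
  have hFop : ∀ x ∈ Xh, mw + Minf ≤ l + w x ∧ l + w x ≤ mw + Msup := by
    intro x hx
    rw [← heig x hx]
    unfold Fop
    have hg_lb : ∀ (a : ↥A) (b : ↥B), mw + Minf ≤
        Real.log (dotProduct (T ↑a ↑b x) estar) +
          Ih C Xh hXhne w ((dotProduct (T ↑a ↑b x) estar)⁻¹ • T ↑a ↑b x) := by
      intro a b
      rw [hkey x hx ↑a a.2 ↑b b.2]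
      exact hinner_lb x hx ↑a a.2 ↑b b.2
    have hg_ub : ∀ (a : ↥A) (b : ↥B),
        Real.log (dotProduct (T ↑a ↑b x) estar) +
          Ih C Xh hXhne w ((dotProduct (T ↑a ↑b x) estar)⁻¹ • T ↑a ↑b x)
        ≤ mw + Msup := by
      intro a b
      rw [hkey x hx ↑a a.2 ↑b b.2]
      exact hinner_ub x hx ↑a a.2 ↑b b.2
    have hsup_lb : ∀ a : ↥A, mw + Minf ≤ ⨆ b : ↥B,
        (Real.log (dotProduct (T ↑a ↑b x) estar) +
          Ih C Xh hXhne w ((dotProduct (T ↑a ↑b x) estar)⁻¹ • T ↑a ↑b x)) := by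
      intro a
      have hbdd : BddAbove (Set.range fun b : ↥B =>
          (Real.log (dotProduct (T ↑a ↑b x) estar) +
            Ih C Xh hXhne w ((dotProduct (T ↑a ↑b x) estar)⁻¹ • T ↑a ↑b x))) :=
        ⟨mw + Msup, by rintro r ⟨b, rfl⟩; exact hg_ub a b⟩
      exact le_trans (hg_lb a ⟨b0, hb0⟩) (le_ciSup hbdd ⟨b0, hb0⟩)
    have hsup_ub : ∀ a : ↥A, (⨆ b : ↥B,
        (Real.log (dotProduct (T ↑a ↑b x) estar) +
          Ih C Xh hXhne w ((dotProduct (T ↑a ↑b x) estar)⁻¹ • T ↑a ↑b x)))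
        ≤ mw + Msup := fun a =>
      ciSup_le fun b => hg_ub a b
    constructor
    · exact le_ciInf hsup_lb
    · refine ciInf_le_of_le ⟨mw + Minf, ?_⟩ ⟨a0, ha0⟩ (hsup_ub ⟨a0, ha0⟩)
      rintro r ⟨a, rfl⟩; exact hsup_lb a
  -- conclusion
  obtain ⟨xmn, hxmn, hxmnEq⟩ := Xh.exists_mem_eq_inf' hXhne w
  obtain ⟨xmx, hxmx, hxmxEq⟩ := Xh.exists_mem_eq_sup' hXhne w
  have hb1 := hFop xmn hxmn
  have hb2 := hFop xmx hxmx
  have hmw_eq : mw = w xmn := by rw [hmwdef, hxmnEq]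
  have hMw_eq : Mw = w xmx := by rw [hMwdef, hxmxEq]
  have hMinf_l : Minf ≤ l := by
    have := hb1.1; rw [← hmw_eq] at this; linarith
  have hl_Msup : l ≤ Msup := by
    have := hb1.2; rw [← hmw_eq] at this; linarith
  have hsemi_bound : Mw - mw ≤ Msup - l := by
    have := hb2.2; rw [← hMw_eq] at this; linarith
  refine ⟨hMinf_l, hl_Msup, ?_, ?_⟩
  · unfold hsemi
    rw [← hMwdef, ← hmwdef]
    exact hsemi_bound
  · linarith
end
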